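/- arXiv:math/0306288 — 3 statements merged into one kernel-verified Lean document; each statement's English description precedes it below -/
import Mathlib

section
/- Let H be a Hopf algebra with bijective antipode S over a field k, and let M be a left H-module and left H-comodule satisfying the left-left anti-Yetter-Drinfeld condition: Δ_M(hm) = h^{(1)} m^{(-1)} S^{-1}(h^{(3)}) ⊗ h^{(2)} m^{(0)} for all h ∈ H, m ∈ M. Then the map M → M given by m ↦ m^{(-1)} m^{(0)} (coaction followed by action) is both H-linear and H-colinear. -/
open TensorProduct

namespace HC

variable {k : Type} [Field k]
variable {H : Type} [Ring H] [Algebra k H]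
variable {M : Type} [AddCommGroup M] [Module k M]

/-- `act` is a left module structure (in curried linear form). -/
def IsLAct (act : H →ₗ[k] M →ₗ[k] M) : Prop :=
  act 1 = LinearMap.id ∧ ∀ g h : H, act (g * h) = (act g) ∘ₗ (act h)

/-- Coassociativity and counitality of a left coaction `coact : M → H ⊗ M`,
with respect to a coproduct `Δ` and counit `ε` on `H`. -/
def IsLCoact (Δ : H →ₗ[k] H ⊗[k] H) (ε : H →ₗ[k] k)
    (coact : M →ₗ[k] H ⊗[k] M) : Prop :=
  ((TensorProduct.map Δ LinearMap.id) ∘ₗ coact =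
    ((TensorProduct.assoc k H H M).symm.toLinearMap) ∘ₗ
      (TensorProduct.map LinearMap.id coact) ∘ₗ coact) ∧
  (∀ m : M, (TensorProduct.lid k M) ((TensorProduct.map ε LinearMap.id) (coact m)) = m)

/-- The left-left anti-Yetter-Drinfeld condition
`Δ_M(hm) = h⁽¹⁾ m⁽⁻¹⁾ S⁻¹(h⁽³⁾) ⊗ h⁽²⁾ m⁽⁰⁾`, phrased via arbitrary finite
Sweedler representations of the (iterated) coproduct and of the coaction. -/
def AYDll (Δ : H →ₗ[k] H ⊗[k] H) (Sinv : H →ₗ[k] H)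
    (act : H →ₗ[k] M →ₗ[k] M) (coact : M →ₗ[k] H ⊗[k] M) : Prop :=
  ∀ (h : H) (m : M) (s : Finset ℕ) (a b : ℕ → H)
    (t : ℕ → Finset ℕ) (c d : ℕ → ℕ → H)
    (u : Finset ℕ) (e : ℕ → H) (m0 : ℕ → M),
    Δ h = ∑ i ∈ s, a i ⊗ₜ b i →
    (∀ i ∈ s, Δ (b i) = ∑ j ∈ t i, c i j ⊗ₜ d i j) →
    coact m = ∑ l ∈ u, e l ⊗ₜ m0 l →
    coact (act h m) = ∑ i ∈ s, ∑ j ∈ t i, ∑ l ∈ u,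
      (a i * e l * Sinv (d i j)) ⊗ₜ act (c i j) (m0 l)

end HC

open HC TensorProduct

section AYDhelpSection

namespace AYDhelp
variable {k : Type} [Field k]
section
variable {H : Type} [Ring H] [HopfAlgebra k H]


theorem exists_rep {A B : Type} [AddCommMonoid A] [AddCommMonoid B] [Module k A] [Module k B]
    (x : A ⊗[k] B) : ∃ (s : Finset ℕ) (a : ℕ → A) (b : ℕ → B), x = ∑ i ∈ s, a i ⊗ₜ[k] b i := by
  induction x with
  | zero => exact ⟨∅, 0, 0, by simp⟩
  | tmul a b => exact ⟨{0}, fun _ => a, fun _ => b, by simp⟩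
  | add x y hx hy =>
    obtain ⟨s, a, b, rfl⟩ := hx
    obtain ⟨t, c, d, rfl⟩ := hy
    refine ⟨s.image (fun i => 2*i) ∪ t.image (fun i => 2*i+1),
      fun n => if n % 2 = 0 then a (n/2) else c (n/2),
      fun n => if n % 2 = 0 then b (n/2) else d (n/2), ?_⟩
    rw [Finset.sum_union]
    · rw [Finset.sum_image (by intro x _ y _ h; simpa using h),
        Finset.sum_image (by intro x _ y _ h; simpa using h)]
      congr 1 <;> refine Finset.sum_congr rfl fun i _ => ?_ <;>
        · have h1 : 2*i % 2 = 0 := by omega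
          have h2 : 2*i/2 = i := by omega
          have h3 : (2*i+1) % 2 = 1 := by omega
          have h4 : (2*i+1)/2 = i := by omega
          simp [h1, h2, h3, h4]
    · rw [Finset.disjoint_left]
      intro n hn hn'
      simp only [Finset.mem_image] at hn hn'
      omega

variable {H : Type} [Ring H] [HopfAlgebra k H]

theorem sum_S_mul {ι : Type} {x : H} {s : Finset ι} {p q : ι → H}
    (hx : Coalgebra.comul (R := k) x = ∑ i ∈ s, p i ⊗ₜ[k] q i) :
    ∑ i ∈ s, HopfAlgebra.antipode (R := k) (p i) * q i
      = Coalgebra.counit (R := k) x • (1 : H) := by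
  have h := HopfAlgebra.mul_antipode_rTensor_comul_apply (R := k) (A := H) x
  rw [hx, map_sum, map_sum] at h
  simp only [LinearMap.rTensor_tmul, LinearMap.mul'_apply] at h
  rw [h, Algebra.algebraMap_eq_smul_one]

theorem sum_mul_S {ι : Type} {x : H} {s : Finset ι} {p q : ι → H}
    (hx : Coalgebra.comul (R := k) x = ∑ i ∈ s, p i ⊗ₜ[k] q i) :
    ∑ i ∈ s, p i * HopfAlgebra.antipode (R := k) (q i)
      = Coalgebra.counit (R := k) x • (1 : H) := by
  have h := HopfAlgebra.mul_antipode_lTensor_comul_apply (R := k) (A := H) x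
  rw [hx, map_sum, map_sum] at h
  simp only [LinearMap.lTensor_tmul, LinearMap.mul'_apply] at h
  rw [h, Algebra.algebraMap_eq_smul_one]

theorem sum_counit_right {ι : Type} {x : H} {s : Finset ι} {p q : ι → H}
    (hx : Coalgebra.comul (R := k) x = ∑ i ∈ s, p i ⊗ₜ[k] q i) :
    ∑ i ∈ s, Coalgebra.counit (R := k) (q i) • p i = x := by
  have h := Coalgebra.lTensor_counit_comul (R := k) x
  rw [hx, map_sum] at h
  simp only [LinearMap.lTensor_tmul] at h
  have h2 := congrArg (TensorProduct.rid k H) h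
  rw [map_sum] at h2
  simpa only [rid_tmul, one_smul] using h2

theorem sum_counit_left {ι : Type} {x : H} {s : Finset ι} {p q : ι → H}
    (hx : Coalgebra.comul (R := k) x = ∑ i ∈ s, p i ⊗ₜ[k] q i) :
    ∑ i ∈ s, Coalgebra.counit (R := k) (p i) • q i = x := by
  have h := Coalgebra.rTensor_counit_comul (R := k) x
  rw [hx, map_sum] at h
  simp only [LinearMap.rTensor_tmul] at h
  have h2 := congrArg (TensorProduct.lid k H) h
  rw [map_sum] at h2
  simpa only [lid_tmul, one_smul] using h2

theorem antipode_one' : HopfAlgebra.antipode (R := k) (1 : H) = 1 := by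
  have h := HopfAlgebra.mul_antipode_rTensor_comul_apply (R := k) (A := H) 1
  simpa [Algebra.TensorProduct.one_def] using h



-- nested-sum variants of the antipode/counit axioms
theorem sum_S_mul₂ {ι ι₂ : Type} {x : H} {s : Finset ι} {t : ι → Finset ι₂}
    {p q : ι → ι₂ → H}
    (hx : Coalgebra.comul (R := k) x = ∑ i ∈ s, ∑ j ∈ t i, p i j ⊗ₜ[k] q i j) :
    ∑ i ∈ s, ∑ j ∈ t i, HopfAlgebra.antipode (R := k) (p i j) * q i j
      = Coalgebra.counit (R := k) x • (1 : H) := by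
  have h := HopfAlgebra.mul_antipode_rTensor_comul_apply (R := k) (A := H) x
  rw [hx] at h
  simp only [map_sum, LinearMap.rTensor_tmul, LinearMap.mul'_apply] at h
  rw [h, Algebra.algebraMap_eq_smul_one]

theorem sum_mul_S₂ {ι ι₂ : Type} {x : H} {s : Finset ι} {t : ι → Finset ι₂}
    {p q : ι → ι₂ → H}
    (hx : Coalgebra.comul (R := k) x = ∑ i ∈ s, ∑ j ∈ t i, p i j ⊗ₜ[k] q i j) :
    ∑ i ∈ s, ∑ j ∈ t i, p i j * HopfAlgebra.antipode (R := k) (q i j)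
      = Coalgebra.counit (R := k) x • (1 : H) := by
  have h := HopfAlgebra.mul_antipode_lTensor_comul_apply (R := k) (A := H) x
  rw [hx] at h
  simp only [map_sum, LinearMap.lTensor_tmul, LinearMap.mul'_apply] at h
  rw [h, Algebra.algebraMap_eq_smul_one]

theorem smul_mul_smul' (c d : k) (z w : H) : (c • z) * (d • w) = (c * d) • (z * w) := by
  rw [smul_mul_assoc, mul_smul_comm, smul_smul]


theorem antipode_mul (x y : H) :
    HopfAlgebra.antipode (R := k) (x * y)
      = HopfAlgebra.antipode (R := k) y * HopfAlgebra.antipode (R := k) x := by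
  obtain ⟨s, p, q, hx⟩ := exists_rep (k := k) (Coalgebra.comul (R := k) x)
  choose t q1 q2 hq using fun i => exists_rep (k := k) (Coalgebra.comul (R := k) (q i))
  choose r p1 p2 hp using fun i => exists_rep (k := k) (Coalgebra.comul (R := k) (p i))
  obtain ⟨s', p', q', hy⟩ := exists_rep (k := k) (Coalgebra.comul (R := k) y)
  choose t' q1' q2' hq' using fun i => exists_rep (k := k) (Coalgebra.comul (R := k) (q' i))
  choose r' p1' p2' hp' using fun i => exists_rep (k := k) (Coalgebra.comul (R := k) (p' i))
  -- coassociativity, elementwise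
  have cax : ∑ i ∈ s, ∑ n ∈ r i, p1 i n ⊗ₜ[k] (p2 i n ⊗ₜ[k] q i)
      = ∑ i ∈ s, ∑ j ∈ t i, p i ⊗ₜ[k] (q1 i j ⊗ₜ[k] q2 i j) := by
    have h := Coalgebra.coassoc_apply (R := k) x
    rw [hx] at h
    simp only [map_sum, LinearMap.rTensor_tmul, LinearMap.lTensor_tmul, hp, hq,
      sum_tmul, tmul_sum, assoc_tmul] at h
    exact h
  have cay : ∑ i ∈ s', ∑ n ∈ r' i, p1' i n ⊗ₜ[k] (p2' i n ⊗ₜ[k] q' i)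
      = ∑ i ∈ s', ∑ j ∈ t' i, p' i ⊗ₜ[k] (q1' i j ⊗ₜ[k] q2' i j) := by
    have h := Coalgebra.coassoc_apply (R := k) y
    rw [hy] at h
    simp only [map_sum, LinearMap.rTensor_tmul, LinearMap.lTensor_tmul, hp', hq',
      sum_tmul, tmul_sum, assoc_tmul] at h
    exact h
  -- the shuffling map
  set μH : H ⊗[k] H →ₗ[k] H := LinearMap.mul' k H with hμH
  set Θ : (H ⊗[k] (H ⊗[k] H)) ⊗[k] (H ⊗[k] (H ⊗[k] H)) →ₗ[k] (H ⊗[k] H) ⊗[k] (H ⊗[k] H) :=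
    (TensorProduct.assoc k H H (H ⊗[k] H)).symm.toLinearMap ∘ₗ
      TensorProduct.map μH
        ((TensorProduct.map μH (TensorProduct.comm k H H).toLinearMap) ∘ₗ
          (TensorProduct.tensorTensorTensorComm k H H H H).toLinearMap) ∘ₗ
      (TensorProduct.tensorTensorTensorComm k H (H ⊗[k] H) H (H ⊗[k] H)).toLinearMap
    with hΘ
  have Θtmul : ∀ u v w u' v' w' : H,
      Θ ((u ⊗ₜ[k] (v ⊗ₜ[k] w)) ⊗ₜ[k] (u' ⊗ₜ[k] (v' ⊗ₜ[k] w')))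
        = ((u * u') ⊗ₜ[k] (v * v')) ⊗ₜ[k] (w' ⊗ₜ[k] w) := by
    intro u v w u' v' w'
    simp [hΘ, hμH]
  have wtmul : (∑ i ∈ s, ∑ n ∈ r i, p1 i n ⊗ₜ[k] (p2 i n ⊗ₜ[k] q i)) ⊗ₜ[k]
        (∑ i ∈ s', ∑ n ∈ r' i, p1' i n ⊗ₜ[k] (p2' i n ⊗ₜ[k] q' i))
      = (∑ i ∈ s, ∑ j ∈ t i, p i ⊗ₜ[k] (q1 i j ⊗ₜ[k] q2 i j)) ⊗ₜ[k]
        (∑ i ∈ s', ∑ j ∈ t' i, p' i ⊗ₜ[k] (q1' i j ⊗ₜ[k] q2' i j)) := by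
    rw [cax, cay]
  have weq := congrArg Θ wtmul
  simp only [sum_tmul, tmul_sum, map_sum, Θtmul] at weq
  -- evaluation map
  set χ : (H ⊗[k] H) ⊗[k] (H ⊗[k] H) →ₗ[k] H :=
    μH ∘ₗ TensorProduct.map
      (μH ∘ₗ TensorProduct.map (HopfAlgebra.antipode (R := k)) LinearMap.id)
      (μH ∘ₗ TensorProduct.map (HopfAlgebra.antipode (R := k)) (HopfAlgebra.antipode (R := k)))
    with hχ
  have χtmul : ∀ a b c d : H,
      χ ((a ⊗ₜ[k] b) ⊗ₜ[k] (c ⊗ₜ[k] d))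
        = (HopfAlgebra.antipode (R := k) a * b)
          * (HopfAlgebra.antipode (R := k) c * HopfAlgebra.antipode (R := k) d) := by
    intro a b c d
    simp [hχ, hμH]
  have main := congrArg χ weq
  simp only [map_sum, χtmul] at main
  -- left side is S y * S x
  have hL : ∑ i' ∈ s', ∑ n' ∈ r' i', ∑ i ∈ s, ∑ n ∈ r i,
      (HopfAlgebra.antipode (R := k) (p1 i n * p1' i' n') * (p2 i n * p2' i' n'))
        * (HopfAlgebra.antipode (R := k) (q' i') * HopfAlgebra.antipode (R := k) (q i))
      = HopfAlgebra.antipode (R := k) y * HopfAlgebra.antipode (R := k) x := by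
    have reorder : ∑ i' ∈ s', ∑ n' ∈ r' i', ∑ i ∈ s, ∑ n ∈ r i,
        (HopfAlgebra.antipode (R := k) (p1 i n * p1' i' n') * (p2 i n * p2' i' n'))
          * (HopfAlgebra.antipode (R := k) (q' i') * HopfAlgebra.antipode (R := k) (q i))
        = ∑ i' ∈ s', ∑ i ∈ s, ∑ n ∈ r i, ∑ n' ∈ r' i',
        (HopfAlgebra.antipode (R := k) (p1 i n * p1' i' n') * (p2 i n * p2' i' n'))
          * (HopfAlgebra.antipode (R := k) (q' i') * HopfAlgebra.antipode (R := k) (q i)) := by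
      refine Finset.sum_congr rfl fun i' _ => ?_
      rw [Finset.sum_comm]
      exact Finset.sum_congr rfl fun i _ => Finset.sum_comm
    rw [reorder]
    have step1 : ∀ i' ∈ s', ∀ i ∈ s, ∑ n ∈ r i, ∑ n' ∈ r' i',
        (HopfAlgebra.antipode (R := k) (p1 i n * p1' i' n') * (p2 i n * p2' i' n'))
          * (HopfAlgebra.antipode (R := k) (q' i') * HopfAlgebra.antipode (R := k) (q i))
        = (Coalgebra.counit (R := k) (p i) * Coalgebra.counit (R := k) (p' i')) •
            (HopfAlgebra.antipode (R := k) (q' i') * HopfAlgebra.antipode (R := k) (q i)) := by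
      intro i' _ i _
      have hrep : Coalgebra.comul (R := k) (p i * p' i')
          = ∑ n ∈ r i, ∑ n' ∈ r' i', (p1 i n * p1' i' n') ⊗ₜ[k] (p2 i n * p2' i' n') := by
        rw [Bialgebra.comul_mul, hp i, hp' i', Finset.sum_mul_sum]
        simp only [Algebra.TensorProduct.tmul_mul_tmul]
      calc ∑ n ∈ r i, ∑ n' ∈ r' i',
            (HopfAlgebra.antipode (R := k) (p1 i n * p1' i' n') * (p2 i n * p2' i' n'))
              * (HopfAlgebra.antipode (R := k) (q' i') * HopfAlgebra.antipode (R := k) (q i))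
          = (∑ n ∈ r i, ∑ n' ∈ r' i',
              HopfAlgebra.antipode (R := k) (p1 i n * p1' i' n') * (p2 i n * p2' i' n'))
              * (HopfAlgebra.antipode (R := k) (q' i') * HopfAlgebra.antipode (R := k) (q i)) := by
            rw [Finset.sum_mul]
            exact Finset.sum_congr rfl fun n _ => by rw [Finset.sum_mul]
        _ = (Coalgebra.counit (R := k) (p i * p' i') • (1 : H))
              * (HopfAlgebra.antipode (R := k) (q' i') * HopfAlgebra.antipode (R := k) (q i)) := by
            rw [sum_S_mul₂ hrep]
        _ = (Coalgebra.counit (R := k) (p i) * Coalgebra.counit (R := k) (p' i')) •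
              (HopfAlgebra.antipode (R := k) (q' i') * HopfAlgebra.antipode (R := k) (q i)) := by
            rw [Bialgebra.counit_mul, smul_mul_assoc, one_mul]
    rw [Finset.sum_congr rfl fun i' hi' => Finset.sum_congr rfl fun i hi => step1 i' hi' i hi]
    have hy' : HopfAlgebra.antipode (R := k) y
        = ∑ i' ∈ s', Coalgebra.counit (R := k) (p' i') • HopfAlgebra.antipode (R := k) (q' i') := by
      conv_lhs => rw [← sum_counit_left hy]
      rw [map_sum]
      exact Finset.sum_congr rfl fun i' _ => by rw [map_smul]
    have hx' : HopfAlgebra.antipode (R := k) x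
        = ∑ i ∈ s, Coalgebra.counit (R := k) (p i) • HopfAlgebra.antipode (R := k) (q i) := by
      conv_lhs => rw [← sum_counit_left hx]
      rw [map_sum]
      exact Finset.sum_congr rfl fun i _ => by rw [map_smul]
    rw [hy', hx', Finset.sum_mul_sum]
    refine Finset.sum_congr rfl fun i' _ => Finset.sum_congr rfl fun i _ => ?_
    rw [smul_mul_smul', mul_comm (Coalgebra.counit (R := k) (p i))]
  -- right side is S (x*y)
  have hR : ∑ i' ∈ s', ∑ j' ∈ t' i', ∑ i ∈ s, ∑ j ∈ t i,
      (HopfAlgebra.antipode (R := k) (p i * p' i') * (q1 i j * q1' i' j'))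
        * (HopfAlgebra.antipode (R := k) (q2' i' j') * HopfAlgebra.antipode (R := k) (q2 i j))
      = HopfAlgebra.antipode (R := k) (x * y) := by
    have reorder : ∑ i' ∈ s', ∑ j' ∈ t' i', ∑ i ∈ s, ∑ j ∈ t i,
        (HopfAlgebra.antipode (R := k) (p i * p' i') * (q1 i j * q1' i' j'))
          * (HopfAlgebra.antipode (R := k) (q2' i' j') * HopfAlgebra.antipode (R := k) (q2 i j))
        = ∑ i' ∈ s', ∑ i ∈ s, ∑ j ∈ t i, ∑ j' ∈ t' i',
        (HopfAlgebra.antipode (R := k) (p i * p' i') * (q1 i j * q1' i' j'))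
          * (HopfAlgebra.antipode (R := k) (q2' i' j') * HopfAlgebra.antipode (R := k) (q2 i j)) := by
      refine Finset.sum_congr rfl fun i' _ => ?_
      rw [Finset.sum_comm]
      exact Finset.sum_congr rfl fun i _ => Finset.sum_comm
    rw [reorder]
    have step1 : ∀ i' ∈ s', ∀ i ∈ s, ∑ j ∈ t i, ∑ j' ∈ t' i',
        (HopfAlgebra.antipode (R := k) (p i * p' i') * (q1 i j * q1' i' j'))
          * (HopfAlgebra.antipode (R := k) (q2' i' j') * HopfAlgebra.antipode (R := k) (q2 i j))
        = (Coalgebra.counit (R := k) (q i) * Coalgebra.counit (R := k) (q' i')) •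
            HopfAlgebra.antipode (R := k) (p i * p' i') := by
      intro i' _ i _
      have inner : ∀ j ∈ t i, ∑ j' ∈ t' i',
          (HopfAlgebra.antipode (R := k) (p i * p' i') * (q1 i j * q1' i' j'))
            * (HopfAlgebra.antipode (R := k) (q2' i' j') * HopfAlgebra.antipode (R := k) (q2 i j))
          = Coalgebra.counit (R := k) (q' i') •
              (HopfAlgebra.antipode (R := k) (p i * p' i')
                * (q1 i j * HopfAlgebra.antipode (R := k) (q2 i j))) := by
        intro j _
        have rearr : ∀ j' ∈ t' i',
            (HopfAlgebra.antipode (R := k) (p i * p' i') * (q1 i j * q1' i' j'))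
              * (HopfAlgebra.antipode (R := k) (q2' i' j') * HopfAlgebra.antipode (R := k) (q2 i j))
            = HopfAlgebra.antipode (R := k) (p i * p' i')
              * (q1 i j * ((q1' i' j' * HopfAlgebra.antipode (R := k) (q2' i' j'))
                  * HopfAlgebra.antipode (R := k) (q2 i j))) := by
          intro j' _
          rw [mul_assoc (HopfAlgebra.antipode (R := k) (p i * p' i')), mul_assoc (q1 i j),
            mul_assoc (q1' i' j')]
        rw [Finset.sum_congr rfl rearr, ← Finset.mul_sum, ← Finset.mul_sum, ← Finset.sum_mul,
          sum_mul_S (hq' i'), smul_mul_assoc, one_mul, mul_smul_comm, mul_smul_comm]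
      rw [Finset.sum_congr rfl inner, ← Finset.smul_sum, ← Finset.mul_sum, sum_mul_S (hq i),
        mul_smul_comm, mul_one, smul_smul, mul_comm (Coalgebra.counit (R := k) (q' i'))]
    rw [Finset.sum_congr rfl fun i' hi' => Finset.sum_congr rfl fun i hi => step1 i' hi' i hi]
    have hxy : x * y = ∑ i' ∈ s', ∑ i ∈ s,
        (Coalgebra.counit (R := k) (q i) * Coalgebra.counit (R := k) (q' i')) • (p i * p' i') := by
      conv_lhs => rw [← sum_counit_right hx, ← sum_counit_right hy]
      rw [Finset.sum_mul_sum, Finset.sum_comm]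
      refine Finset.sum_congr rfl fun i' _ => Finset.sum_congr rfl fun i _ => ?_
      rw [smul_mul_smul']
    rw [hxy, map_sum]
    exact Finset.sum_congr rfl fun i' _ => by
      rw [map_sum]
      exact Finset.sum_congr rfl fun i _ => by rw [map_smul]
  rw [hL, hR] at main
  exact main.symm

section SinvPart
variable (Sinv : H →ₗ[k] H)
  (hS : ∀ h : H, Sinv (HopfAlgebra.antipode (R := k) h) = h)
  (hS' : ∀ h : H, HopfAlgebra.antipode (R := k) (Sinv h) = h)

include hS in
theorem Sinv_one : Sinv 1 = 1 := by
  calc Sinv 1 = Sinv (HopfAlgebra.antipode (R := k) 1) := by rw [antipode_one']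
    _ = 1 := hS 1

include hS hS' in
theorem Sinv_mul (a b : H) : Sinv (a * b) = Sinv b * Sinv a := by
  have h : a * b = HopfAlgebra.antipode (R := k) (Sinv b * Sinv a) := by
    rw [antipode_mul, hS', hS']
  rw [h, hS]

include hS hS' in
theorem sum_Sinv_mul {ι : Type} {x : H} {s : Finset ι} {c d : ι → H}
    (hx : Coalgebra.comul (R := k) x = ∑ i ∈ s, c i ⊗ₜ[k] d i) :
    ∑ i ∈ s, Sinv (d i) * c i = Coalgebra.counit (R := k) x • (1 : H) := by
  calc ∑ i ∈ s, Sinv (d i) * c i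
      = ∑ i ∈ s, Sinv (HopfAlgebra.antipode (R := k) (c i) * d i) :=
        Finset.sum_congr rfl fun i _ => by rw [Sinv_mul Sinv hS hS', hS]
    _ = Sinv (∑ i ∈ s, HopfAlgebra.antipode (R := k) (c i) * d i) := (map_sum _ _ _).symm
    _ = Sinv (Coalgebra.counit (R := k) x • (1 : H)) := by rw [sum_S_mul hx]
    _ = Coalgebra.counit (R := k) x • (1 : H) := by rw [map_smul, Sinv_one Sinv hS]

include hS hS' in
theorem sum_mul_Sinv {ι : Type} {x : H} {s : Finset ι} {c d : ι → H}
    (hx : Coalgebra.comul (R := k) x = ∑ i ∈ s, c i ⊗ₜ[k] d i) :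
    ∑ i ∈ s, d i * Sinv (c i) = Coalgebra.counit (R := k) x • (1 : H) := by
  calc ∑ i ∈ s, d i * Sinv (c i)
      = ∑ i ∈ s, Sinv (c i * HopfAlgebra.antipode (R := k) (d i)) :=
        Finset.sum_congr rfl fun i _ => by rw [Sinv_mul Sinv hS hS', hS]
    _ = Sinv (∑ i ∈ s, c i * HopfAlgebra.antipode (R := k) (d i)) := (map_sum _ _ _).symm
    _ = Sinv (Coalgebra.counit (R := k) x • (1 : H)) := by rw [sum_mul_S hx]
    _ = Coalgebra.counit (R := k) x • (1 : H) := by rw [map_smul, Sinv_one Sinv hS]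

end SinvPart
end
end AYDhelp

end AYDhelpSection

/-- For a Hopf algebra `H` with bijective antipode and a
left module, left comodule `M` satisfying the left-left anti-Yetter-Drinfeld
condition, the map `m ↦ m⁽⁻¹⁾ m⁽⁰⁾` (coaction followed by action) is both
`H`-linear and `H`-colinear. -/
theorem stmt0 {k : Type} [Field k] {H : Type} [Ring H] [HopfAlgebra k H]
    (Sinv : H →ₗ[k] H)
    (hS : ∀ h : H, Sinv (HopfAlgebra.antipode (R := k) h) = h)
    (hS' : ∀ h : H, HopfAlgebra.antipode (R := k) (Sinv h) = h)
    {M : Type} [AddCommGroup M] [Module k M]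
    (act : H →ₗ[k] M →ₗ[k] M) (coact : M →ₗ[k] H ⊗[k] M)
    (hact : IsLAct act)
    (hcoact : IsLCoact (Coalgebra.comul (R := k)) (Coalgebra.counit (R := k)) coact)
    (hAYD : AYDll (Coalgebra.comul (R := k)) Sinv act coact) :
    (∀ (h : H) (m : M),
        ((TensorProduct.lift act) ∘ₗ coact) (act h m) =
          act h (((TensorProduct.lift act) ∘ₗ coact) m)) ∧
    (∀ m : M,
        coact (((TensorProduct.lift act) ∘ₗ coact) m) =
          (TensorProduct.map LinearMap.id ((TensorProduct.lift act) ∘ₗ coact))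
            (coact m)) := by
  classical
  constructor
  · -- H-linearity
    intro h m
    obtain ⟨u, e, m0, h0⟩ := AYDhelp.exists_rep (k := k) (coact m)
    obtain ⟨s, a, b, h1⟩ := AYDhelp.exists_rep (k := k) (Coalgebra.comul (R := k) h)
    choose t c d h2 using fun i => AYDhelp.exists_rep (k := k) (Coalgebra.comul (R := k) (b i))
    have hstar := hAYD h m s a b t c d u e m0 h1 (fun i _ => h2 i) h0
    have hcomp : ∀ (g g' : H) (n : M), act (g * g') n = act g (act g' n) := by
      intro g g' n
      rw [hact.2]
      rfl
    simp only [LinearMap.comp_apply]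
    rw [hstar, h0]
    simp only [map_sum, TensorProduct.lift.tmul]
    have step : ∀ i ∈ s, ∑ j ∈ t i, ∑ l ∈ u,
        act (a i * e l * Sinv (d i j)) (act (c i j) (m0 l))
        = ∑ l ∈ u, Coalgebra.counit (R := k) (b i) • act (a i * e l) (m0 l) := by
      intro i _
      rw [Finset.sum_comm]
      refine Finset.sum_congr rfl fun l _ => ?_
      calc ∑ j ∈ t i, act (a i * e l * Sinv (d i j)) (act (c i j) (m0 l))
          = ∑ j ∈ t i, act ((a i * e l) * (Sinv (d i j) * c i j)) (m0 l) := by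
            refine Finset.sum_congr rfl fun j _ => ?_
            rw [← hcomp, mul_assoc]
        _ = act ((a i * e l) * ∑ j ∈ t i, Sinv (d i j) * c i j) (m0 l) := by
            rw [Finset.mul_sum, map_sum, LinearMap.sum_apply]
        _ = Coalgebra.counit (R := k) (b i) • act (a i * e l) (m0 l) := by
            rw [AYDhelp.sum_Sinv_mul Sinv hS hS' (h2 i), mul_smul_comm, mul_one, map_smul,
              LinearMap.smul_apply]
    rw [Finset.sum_congr rfl step, Finset.sum_comm]
    refine Finset.sum_congr rfl fun l _ => ?_
    calc ∑ i ∈ s, Coalgebra.counit (R := k) (b i) • act (a i * e l) (m0 l)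
        = act ((∑ i ∈ s, Coalgebra.counit (R := k) (b i) • a i) * e l) (m0 l) := by
          rw [Finset.sum_mul, map_sum, LinearMap.sum_apply]
          refine Finset.sum_congr rfl fun i _ => ?_
          rw [smul_mul_assoc, map_smul, LinearMap.smul_apply]
      _ = act (h * e l) (m0 l) := by rw [AYDhelp.sum_counit_right h1]
      _ = act h (act (e l) (m0 l)) := hcomp _ _ _
  · -- H-colinearity
    intro m
    simp only [LinearMap.comp_apply]
    obtain ⟨u, e, m0, h0⟩ := AYDhelp.exists_rep (k := k) (coact m)
    choose s a b h1 using fun l => AYDhelp.exists_rep (k := k) (Coalgebra.comul (R := k) (e l))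
    choose t c d h2 using fun l i =>
      AYDhelp.exists_rep (k := k) (Coalgebra.comul (R := k) (b l i))
    choose v e' m00 h3 using fun l => AYDhelp.exists_rep (k := k) (coact (m0 l))
    choose w g m3 h6 using fun l p => AYDhelp.exists_rep (k := k) (coact (m00 l p))
    choose xx G4 m4 h8 using fun l p r => AYDhelp.exists_rep (k := k) (coact (m3 l p r))
    choose yy g1 g2 h9 using fun l p r =>
      AYDhelp.exists_rep (k := k) (Coalgebra.comul (R := k) (g l p r))
    -- counit law of the comodule, elementwise
    have L6 : ∀ (n : M) (sf : Finset ℕ) (gg : ℕ → H) (mm : ℕ → M),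
        coact n = ∑ i ∈ sf, gg i ⊗ₜ[k] mm i →
        ∑ i ∈ sf, Coalgebra.counit (R := k) (gg i) • mm i = n := by
      intro n sf gg mm hrep
      have hcnt := hcoact.2 n
      rw [hrep] at hcnt
      simpa only [map_sum, TensorProduct.map_tmul, LinearMap.id_coe, id_eq,
        TensorProduct.lid_tmul] using hcnt
    -- Step 1 : value of coact (f m)
    have hstar : coact ((TensorProduct.lift act) (coact m))
        = ∑ l ∈ u, ∑ i ∈ s l, ∑ j ∈ t l i, ∑ p ∈ v l,
          (a l i * e' l p * Sinv (d l i j)) ⊗ₜ[k] act (c l i j) (m00 l p) := by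
      rw [h0, map_sum]
      simp only [TensorProduct.lift.tmul]
      rw [map_sum]
      exact Finset.sum_congr rfl fun l _ =>
        hAYD (e l) (m0 l) (s l) (a l) (b l) (t l) (c l) (d l) (v l) (e' l) (m00 l)
          (h1 l) (fun i _ => h2 l i) (h3 l)
    -- coassociativity of the coaction at m, expanded
    have EQ1 : ∑ l ∈ u, ∑ i ∈ s l, (a l i ⊗ₜ[k] b l i) ⊗ₜ[k] m0 l
        = ∑ l ∈ u, ∑ p ∈ v l, (e l ⊗ₜ[k] e' l p) ⊗ₜ[k] m00 l p := by
      have hca := LinearMap.congr_fun hcoact.1 m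
      simp only [LinearMap.comp_apply, LinearEquiv.coe_coe] at hca
      rw [h0] at hca
      simp only [map_sum, TensorProduct.map_tmul, LinearMap.id_coe, id_eq, h1, h3,
        TensorProduct.sum_tmul, TensorProduct.tmul_sum, TensorProduct.assoc_symm_tmul] at hca
      exact hca
    -- apply (id ⊗ Δ) ⊗ coact to EQ1
    have EQI := congrArg
      (TensorProduct.map (TensorProduct.map LinearMap.id (Coalgebra.comul (R := k))) coact) EQ1
    simp only [map_sum, TensorProduct.map_tmul, LinearMap.id_coe, id_eq, h2, h3,
      TensorProduct.sum_tmul, TensorProduct.tmul_sum] at EQI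
    have EQI' : ∑ l ∈ u, ∑ i ∈ s l, ∑ j ∈ t l i, ∑ p ∈ v l,
        (a l i ⊗ₜ[k] (c l i j ⊗ₜ[k] d l i j)) ⊗ₜ[k] (e' l p ⊗ₜ[k] m00 l p)
        = ∑ l ∈ u, ∑ p ∈ v l,
          (e l ⊗ₜ[k] Coalgebra.comul (R := k) (e' l p)) ⊗ₜ[k] coact (m00 l p) := by
      rw [← EQI]
      exact Finset.sum_congr rfl fun l _ => Finset.sum_congr rfl fun i _ => Finset.sum_comm
    clear EQI
    -- coassociativity at m0 l, with coact applied to the last leg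
    have EQIII : ∀ l ∈ u,
        ∑ p ∈ v l, Coalgebra.comul (R := k) (e' l p) ⊗ₜ[k] coact (m00 l p)
        = ∑ p ∈ v l, ∑ r ∈ w l p, ∑ o ∈ xx l p r,
            (e' l p ⊗ₜ[k] g l p r) ⊗ₜ[k] (G4 l p r o ⊗ₜ[k] m4 l p r o) := by
      intro l _
      have hca := LinearMap.congr_fun hcoact.1 (m0 l)
      simp only [LinearMap.comp_apply, LinearEquiv.coe_coe] at hca
      rw [h3 l] at hca
      simp only [map_sum, TensorProduct.map_tmul, LinearMap.id_coe, id_eq, h6,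
        TensorProduct.tmul_sum, TensorProduct.assoc_symm_tmul] at hca
      have hm := congrArg
        (TensorProduct.map (LinearMap.id : H ⊗[k] H →ₗ[k] H ⊗[k] H) coact) hca
      simp only [map_sum, TensorProduct.map_tmul, LinearMap.id_coe, id_eq, h8,
        TensorProduct.tmul_sum] at hm
      exact hm
    -- the four-fold coaction form
    have EQ10 : ∑ l ∈ u, ∑ i ∈ s l, ∑ j ∈ t l i, ∑ p ∈ v l,
        (a l i ⊗ₜ[k] (c l i j ⊗ₜ[k] d l i j)) ⊗ₜ[k] (e' l p ⊗ₜ[k] m00 l p)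
        = ∑ l ∈ u, ∑ p ∈ v l, ∑ r ∈ w l p, ∑ o ∈ xx l p r,
            (e l ⊗ₜ[k] (e' l p ⊗ₜ[k] g l p r)) ⊗ₜ[k] (G4 l p r o ⊗ₜ[k] m4 l p r o) := by
      rw [EQI']
      refine Finset.sum_congr rfl fun l hl => ?_
      have hm := congrArg
        (⇑((TensorProduct.assoc k H (H ⊗[k] H) (H ⊗[k] M)).symm.toLinearMap ∘ₗ
          TensorProduct.mk k H ((H ⊗[k] H) ⊗[k] (H ⊗[k] M)) (e l))) (EQIII l hl)
      simp only [LinearMap.comp_apply, map_sum, TensorProduct.mk_apply,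
        LinearEquiv.coe_coe, TensorProduct.assoc_symm_tmul] at hm
      exact hm
    -- the evaluation map implementing the AYD expression
    set μH : H ⊗[k] H →ₗ[k] H := LinearMap.mul' k H with hμH
    set B : (H ⊗[k] H) ⊗[k] M →ₗ[k] H ⊗[k] M :=
      TensorProduct.map Sinv (TensorProduct.lift act)
        ∘ₗ (TensorProduct.assoc k H H M).toLinearMap
        ∘ₗ TensorProduct.map (TensorProduct.comm k H H).toLinearMap LinearMap.id with hB
    set Gp : (H ⊗[k] (H ⊗[k] H)) ⊗[k] (H ⊗[k] M) →ₗ[k] H ⊗[k] M :=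
      TensorProduct.map (μH ∘ₗ TensorProduct.map μH LinearMap.id) LinearMap.id
        ∘ₗ (TensorProduct.assoc k (H ⊗[k] H) H M).symm.toLinearMap
        ∘ₗ TensorProduct.map LinearMap.id B
        ∘ₗ (TensorProduct.tensorTensorTensorComm k H (H ⊗[k] H) H M).toLinearMap with hGp
    have Gp_tmul : ∀ (x cc dd ee : H) (n : M),
        Gp ((x ⊗ₜ[k] (cc ⊗ₜ[k] dd)) ⊗ₜ[k] (ee ⊗ₜ[k] n))
          = (x * ee * Sinv dd) ⊗ₜ[k] act cc n := by
      intro x cc dd ee n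
      simp [hGp, hB, hμH]
    -- apply Gp to EQ10
    have keyG := congrArg (⇑Gp) EQ10
    simp only [map_sum, Gp_tmul] at keyG
    -- collapse the right-hand side
    have final : ∀ l ∈ u, ∀ p ∈ v l, ∑ r ∈ w l p, ∑ o ∈ xx l p r,
        (e l * G4 l p r o * Sinv (g l p r)) ⊗ₜ[k] act (e' l p) (m4 l p r o)
        = e l ⊗ₜ[k] act (e' l p) (m00 l p) := by
      intro l _ p _
      have hca := LinearMap.congr_fun hcoact.1 (m00 l p)
      simp only [LinearMap.comp_apply, LinearEquiv.coe_coe] at hca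
      rw [h6 l p] at hca
      simp only [map_sum, TensorProduct.map_tmul, LinearMap.id_coe, id_eq, h8, h9,
        TensorProduct.sum_tmul, TensorProduct.tmul_sum,
        TensorProduct.assoc_symm_tmul] at hca
      -- hca : ∑ r ∑ o (g1 ⊗ g2) ⊗ m3 = ∑ r ∑ o' (g ⊗ G4) ⊗ m4
      set σE : H ⊗[k] H →ₗ[k] H :=
        LinearMap.mulLeft k (e l) ∘ₗ μH ∘ₗ TensorProduct.map LinearMap.id Sinv
          ∘ₗ (TensorProduct.comm k H H).toLinearMap with hσ
      have σtmul : ∀ x y : H, σE (x ⊗ₜ[k] y) = e l * (y * Sinv x) := by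
        intro x y
        simp [hσ, hμH]
      have hm := congrArg (⇑(TensorProduct.map σE (act (e' l p)))) hca
      simp only [map_sum, TensorProduct.map_tmul, σtmul] at hm
      -- left side of hm collapses by the Hopf identity and counitality
      have lhs_eq : ∑ r ∈ w l p, ∑ o ∈ yy l p r,
          (e l * (g2 l p r o * Sinv (g1 l p r o))) ⊗ₜ[k] act (e' l p) (m3 l p r)
          = e l ⊗ₜ[k] act (e' l p) (m00 l p) := by
        have perR : ∀ r ∈ w l p, ∑ o ∈ yy l p r,
            (e l * (g2 l p r o * Sinv (g1 l p r o))) ⊗ₜ[k] act (e' l p) (m3 l p r)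
            = e l ⊗ₜ[k] (Coalgebra.counit (R := k) (g l p r) • act (e' l p) (m3 l p r)) := by
          intro r _
          rw [← TensorProduct.sum_tmul, ← Finset.mul_sum,
            AYDhelp.sum_mul_Sinv Sinv hS hS' (h9 l p r), mul_smul_comm, mul_one,
            TensorProduct.smul_tmul]
        rw [Finset.sum_congr rfl perR, ← TensorProduct.tmul_sum]
        congr 1
        calc ∑ r ∈ w l p, Coalgebra.counit (R := k) (g l p r) • act (e' l p) (m3 l p r)
            = act (e' l p) (∑ r ∈ w l p, Coalgebra.counit (R := k) (g l p r) • m3 l p r) := by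
              rw [map_sum]
              exact Finset.sum_congr rfl fun r _ => (map_smul _ _ _).symm
          _ = act (e' l p) (m00 l p) := by rw [L6 (m00 l p) (w l p) (g l p) (m3 l p) (h6 l p)]
      simp only [mul_assoc]
      rw [← hm]
      simpa only [mul_assoc] using lhs_eq
    -- put everything together
    rw [hstar, keyG, h0]
    simp only [map_sum, TensorProduct.map_tmul, LinearMap.comp_apply, LinearMap.id_coe,
      id_eq, h3, TensorProduct.lift.tmul, TensorProduct.tmul_sum]
    exact Finset.sum_congr rfl fun l hl => Finset.sum_congr rfl fun p hp => final l hl p hp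
end

section
/- Let H be a Hopf algebra with bijective antipode, N a left-left Yetter-Drinfeld module over H, and M a left-left anti-Yetter-Drinfeld module over H. Then N ⊗ M is a left-left anti-Yetter-Drinfeld module via the diagonal action h(n ⊗ m) = h^{(1)} n ⊗ h^{(2)} m and the codiagonal coaction n ⊗ m ↦ n^{(-1)} m^{(-1)} ⊗ (n^{(0)} ⊗ m^{(0)}). -/
open TensorProduct

namespace HC

variable {k : Type} [Field k]
variable {H : Type} [Ring H] [Algebra k H]
variable {M : Type} [AddCommGroup M] [Module k M]

/-- The left-left Yetter-Drinfeld condition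
`Δ_N(hn) = h⁽¹⁾ n⁽⁻¹⁾ S(h⁽³⁾) ⊗ h⁽²⁾ n⁽⁰⁾`. -/
def YDll (Δ : H →ₗ[k] H ⊗[k] H) (S : H →ₗ[k] H)
    (act : H →ₗ[k] M →ₗ[k] M) (coact : M →ₗ[k] H ⊗[k] M) : Prop :=
  ∀ (h : H) (m : M) (s : Finset ℕ) (a b : ℕ → H)
    (t : ℕ → Finset ℕ) (c d : ℕ → ℕ → H)
    (u : Finset ℕ) (e : ℕ → H) (m0 : ℕ → M),
    Δ h = ∑ i ∈ s, a i ⊗ₜ b i →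
    (∀ i ∈ s, Δ (b i) = ∑ j ∈ t i, c i j ⊗ₜ d i j) →
    coact m = ∑ l ∈ u, e l ⊗ₜ m0 l →
    coact (act h m) = ∑ i ∈ s, ∑ j ∈ t i, ∑ l ∈ u,
      (a i * e l * S (d i j)) ⊗ₜ act (c i j) (m0 l)

variable {N : Type} [AddCommGroup N] [Module k N]

/-- The diagonal left `H`-action `h (n ⊗ m) = h⁽¹⁾ n ⊗ h⁽²⁾ m` on `N ⊗ M`,
in curried linear form. -/
noncomputable def diagAct (Δ : H →ₗ[k] H ⊗[k] H)
    (actN : H →ₗ[k] N →ₗ[k] N) (actM : H →ₗ[k] M →ₗ[k] M) :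
    H →ₗ[k] (N ⊗[k] M) →ₗ[k] (N ⊗[k] M) :=
  TensorProduct.curry
    ((TensorProduct.map (TensorProduct.lift actN) (TensorProduct.lift actM)) ∘ₗ
      (TensorProduct.tensorTensorTensorComm k H H N M).toLinearMap ∘ₗ
      (TensorProduct.map Δ LinearMap.id))

/-- The codiagonal left coaction `n ⊗ m ↦ n⁽⁻¹⁾ m⁽⁻¹⁾ ⊗ (n⁽⁰⁾ ⊗ m⁽⁰⁾)`. -/
noncomputable def codiagCoact
    (coactN : N →ₗ[k] H ⊗[k] N) (coactM : M →ₗ[k] H ⊗[k] M) :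
    (N ⊗[k] M) →ₗ[k] H ⊗[k] (N ⊗[k] M) :=
  (TensorProduct.map (LinearMap.mul' k H) LinearMap.id) ∘ₗ
    (TensorProduct.tensorTensorTensorComm k H N H M).toLinearMap ∘ₗ
    (TensorProduct.map coactN coactM)

end HC

namespace HCAux

variable {k : Type} [Field k]

section Helpers
variable {A B C X Y Z W : Type} [AddCommMonoid A] [Module k A] [AddCommMonoid B] [Module k B]
  [AddCommMonoid C] [Module k C] [AddCommMonoid X] [Module k X] [AddCommMonoid Y] [Module k Y]
  [AddCommMonoid Z] [Module k Z] [AddCommMonoid W] [Module k W]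

lemma mapL (f : B →ₗ[k] C) (g : A →ₗ[k] B) :
    (map (LinearMap.id : X →ₗ[k] X) f) ∘ₗ (map LinearMap.id g) = map LinearMap.id (f ∘ₗ g) := by
  rw [← map_comp, LinearMap.id_comp]

lemma mapR (f : B →ₗ[k] C) (g : A →ₗ[k] B) :
    (map f (LinearMap.id : X →ₗ[k] X)) ∘ₗ (map g LinearMap.id) = map (f ∘ₗ g) LinearMap.id := by
  rw [← map_comp, LinearMap.id_comp]

lemma apL (f : B →ₗ[k] C) (g : A →ₗ[k] B) (x : X ⊗[k] A) :
    map LinearMap.id f (map LinearMap.id g x) = map LinearMap.id (f ∘ₗ g) x :=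
  DFunLike.congr_fun (mapL f g) x

lemma apR (f : B →ₗ[k] C) (g : A →ₗ[k] B) (x : A ⊗[k] X) :
    map f LinearMap.id (map g LinearMap.id x) = map (f ∘ₗ g) LinearMap.id x :=
  DFunLike.congr_fun (mapR f g) x

lemma apLR (f : A →ₗ[k] B) (g : X →ₗ[k] Y) (x : A ⊗[k] X) :
    map f LinearMap.id (map LinearMap.id g x) = map f g x := by
  have : (map f (LinearMap.id : Y →ₗ[k] Y)) ∘ₗ (map (LinearMap.id : A →ₗ[k] A) g) = map f g := by
    rw [← map_comp, LinearMap.id_comp, LinearMap.comp_id]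
  exact DFunLike.congr_fun this x

lemma apRL (f : A →ₗ[k] B) (g : X →ₗ[k] Y) (x : A ⊗[k] X) :
    map LinearMap.id g (map f LinearMap.id x) = map f g x := by
  have : (map (LinearMap.id : B →ₗ[k] B) g) ∘ₗ (map f (LinearMap.id : X →ₗ[k] X)) = map f g := by
    rw [← map_comp, LinearMap.id_comp, LinearMap.comp_id]
  exact DFunLike.congr_fun this x

lemma natR (f : C →ₗ[k] W) :
    (map (LinearMap.id : (A ⊗[k] B) →ₗ[k] _) f) ∘ₗ (TensorProduct.assoc k A B C).symm.toLinearMap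
      = (TensorProduct.assoc k A B W).symm.toLinearMap ∘ₗ
        (map LinearMap.id (map LinearMap.id f)) := by
  have := map_map_comp_assoc_symm_eq (R := k) (LinearMap.id : A →ₗ[k] A)
    (LinearMap.id : B →ₗ[k] B) f
  rwa [map_id] at this

lemma apNatR (f : C →ₗ[k] W) (x : A ⊗[k] (B ⊗[k] C)) :
    map LinearMap.id f ((TensorProduct.assoc k A B C).symm x)
      = (TensorProduct.assoc k A B W).symm (map LinearMap.id (map LinearMap.id f) x) := by
  have := DFunLike.congr_fun (natR (A := A) (B := B) f) x
  simpa using this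

lemma apNatM (f : B →ₗ[k] W) (x : A ⊗[k] (B ⊗[k] C)) :
    map (map LinearMap.id f) LinearMap.id ((TensorProduct.assoc k A B C).symm x)
      = (TensorProduct.assoc k A W C).symm (map LinearMap.id (map f LinearMap.id) x) :=
  map_map_assoc_symm LinearMap.id f LinearMap.id x

end Helpers

variable {H : Type} [Ring H] [HopfAlgebra k H]

local notation "Dl" => (Coalgebra.comul : H →ₗ[k] H ⊗[k] H)
local notation "lid" => LinearMap.id
local notation "γ" => TensorProduct.assoc k
local notation "τ" => TensorProduct.comm k
local notation "μ" => LinearMap.mul' k H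

noncomputable def T3 : H →ₗ[k] H ⊗[k] (H ⊗[k] H) := (map lid Dl) ∘ₗ Dl
noncomputable def T4 : H →ₗ[k] H ⊗[k] (H ⊗[k] (H ⊗[k] H)) := (map lid T3) ∘ₗ Dl
noncomputable def T5 : H →ₗ[k] H ⊗[k] (H ⊗[k] (H ⊗[k] (H ⊗[k] H))) := (map lid T4) ∘ₗ Dl
noncomputable def T6 : H →ₗ[k] H ⊗[k] (H ⊗[k] (H ⊗[k] (H ⊗[k] (H ⊗[k] H)))) :=
  (map lid T5) ∘ₗ Dl

lemma fA' : (TensorProduct.assoc k H H H).toLinearMap ∘ₗ (map Dl lid) ∘ₗ Dl = (T3 (k := k)) :=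
  Coalgebra.coassoc

lemma fA : (map Dl lid) ∘ₗ Dl =
    (TensorProduct.assoc k H H H).symm.toLinearMap ∘ₗ (T3 (k := k)) := by
  rw [← fA']; ext1 h; simp

lemma apfA (h : H) : map Dl lid (Dl h) = (γ H H H).symm (T3 h) := by
  have := DFunLike.congr_fun (fA (k := k) (H := H)) h
  simpa using this

lemma apfA' (h : H) : (γ H H H) (map Dl lid (Dl h)) = T3 h := by
  rw [apfA]; exact LinearEquiv.apply_symm_apply _ _

noncomputable def Ysplit : H ⊗[k] (H ⊗[k] H) →ₗ[k] H ⊗[k] (H ⊗[k] (H ⊗[k] H)) :=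
  (γ H H (H ⊗[k] H)).toLinearMap ∘ₗ (map Dl lid)

lemma T3_ap (h : H) : T3 (k := k) h = map lid Dl (Dl h) := rfl
lemma T4_ap (h : H) : T4 (k := k) h = map lid T3 (Dl h) := rfl
lemma T5_ap (h : H) : T5 (k := k) h = map lid T4 (Dl h) := rfl
lemma T6_ap (h : H) : T6 (k := k) h = map lid T5 (Dl h) := rfl

lemma M1 : (Ysplit (k := k) (H := H)) ∘ₗ T3 = T4 := by
  ext1 h
  calc (Ysplit ∘ₗ (T3 (k := k))) h
      = (γ H H (H ⊗[k] H)) (map Dl lid (map lid Dl (Dl h))) := rfl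
    _ = (γ H H (H ⊗[k] H)) (map Dl Dl (Dl h)) := by rw [apLR]
    _ = (γ H H (H ⊗[k] H)) (map lid Dl (map Dl lid (Dl h))) := by rw [apRL]
    _ = (γ H H (H ⊗[k] H)) (map lid Dl ((γ H H H).symm (T3 h))) := by rw [apfA]
    _ = (γ H H (H ⊗[k] H)) ((γ H H (H ⊗[k] H)).symm
          (map lid (map lid Dl) (T3 h))) := by rw [apNatR]
    _ = map lid (map lid Dl) (T3 h) := LinearEquiv.apply_symm_apply _ _
    _ = map lid (map lid Dl) (map lid Dl (Dl h)) := rfl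
    _ = map lid ((map lid Dl) ∘ₗ Dl) (Dl h) := apL _ _ _
    _ = T4 h := rfl

lemma M2 : (map lid (Ysplit (k := k) (H := H))) ∘ₗ T4 = T5 := by
  ext1 h
  calc (map lid Ysplit ∘ₗ (T4 (k := k))) h
      = map lid Ysplit (map lid T3 (Dl h)) := rfl
    _ = map lid (Ysplit ∘ₗ T3) (Dl h) := apL _ _ _
    _ = T5 h := by rw [M1]; rfl

lemma M3 : (map lid (map lid (Ysplit (k := k) (H := H)))) ∘ₗ T5 = T6 := by
  ext1 h
  calc (map lid (map lid Ysplit) ∘ₗ (T5 (k := k))) h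
      = map lid (map lid Ysplit) (map lid T4 (Dl h)) := rfl
    _ = map lid ((map lid Ysplit) ∘ₗ T4) (Dl h) := apL _ _ _
    _ = T6 h := by rw [M2]; rfl

lemma M5a : (map lid (map lid (T3 (k := k) (H := H)))) ∘ₗ T3 = T5 := by
  ext1 h
  calc (map lid (map lid T3) ∘ₗ (T3 (k := k))) h
      = map lid (map lid T3) (map lid Dl (Dl h)) := rfl
    _ = map lid ((map lid T3) ∘ₗ Dl) (Dl h) := apL _ _ _
    _ = T5 h := rfl

lemma M5 : (map lid (map lid (map lid (T3 (k := k) (H := H))))) ∘ₗ T4 = T6 := by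
  ext1 h
  calc (map lid (map lid (map lid T3)) ∘ₗ (T4 (k := k))) h
      = map lid (map lid (map lid T3)) (map lid T3 (Dl h)) := rfl
    _ = map lid ((map lid (map lid T3)) ∘ₗ T3) (Dl h) := apL _ _ _
    _ = T6 h := by rw [M5a]; rfl

lemma M4 (h : H) :
    map (T3 (k := k) (H := H)) T3 (Dl h) =
      (γ H (H ⊗[k] H) (H ⊗[k] (H ⊗[k] H))).symm
        (map lid (γ H H (H ⊗[k] (H ⊗[k] H))).symm.toLinearMap (T6 h)) := by
  have step1 : map (T3 (k := k) (H := H)) lid (Dl h) =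
      (γ H (H ⊗[k] H) H).symm (map lid (γ H H H).symm.toLinearMap (T4 h)) := by
    calc map (T3 (k := k) (H := H)) lid (Dl h)
        = map ((map lid Dl) ∘ₗ Dl) lid (Dl h) := rfl
      _ = map (map lid Dl) lid (map Dl lid (Dl h)) := (apR _ _ _).symm
      _ = map (map lid Dl) lid ((γ H H H).symm (T3 h)) := by rw [apfA]
      _ = (γ H (H ⊗[k] H) H).symm (map lid (map Dl lid) (T3 h)) := apNatM _ _
      _ = (γ H (H ⊗[k] H) H).symm (map lid (map Dl lid) (map lid Dl (Dl h))) := rfl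
      _ = (γ H (H ⊗[k] H) H).symm (map lid ((map Dl lid) ∘ₗ Dl) (Dl h)) := by rw [apL]
      _ = (γ H (H ⊗[k] H) H).symm (map lid ((γ H H H).symm.toLinearMap ∘ₗ T3) (Dl h)) := by
            rw [fA]
      _ = (γ H (H ⊗[k] H) H).symm
            (map lid (γ H H H).symm.toLinearMap (map lid T3 (Dl h))) := by rw [apL]
      _ = (γ H (H ⊗[k] H) H).symm (map lid (γ H H H).symm.toLinearMap (T4 h)) := rfl
  calc map (T3 (k := k) (H := H)) T3 (Dl h)
      = map lid T3 (map T3 lid (Dl h)) := (apRL _ _ _).symm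
    _ = map lid T3 ((γ H (H ⊗[k] H) H).symm
          (map lid (γ H H H).symm.toLinearMap (T4 h))) := by rw [step1]
    _ = (γ H (H ⊗[k] H) (H ⊗[k] (H ⊗[k] H))).symm
          (map lid (map lid T3)
            (map lid (γ H H H).symm.toLinearMap (T4 h))) := apNatR _ _
    _ = (γ H (H ⊗[k] H) (H ⊗[k] (H ⊗[k] H))).symm
          (map lid ((map lid T3) ∘ₗ (γ H H H).symm.toLinearMap) (T4 h)) := by rw [apL]
    _ = (γ H (H ⊗[k] H) (H ⊗[k] (H ⊗[k] H))).symm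
          (map lid ((γ H H (H ⊗[k] (H ⊗[k] H))).symm.toLinearMap ∘ₗ
            (map lid (map lid T3))) (T4 h)) := by rw [natR]
    _ = (γ H (H ⊗[k] H) (H ⊗[k] (H ⊗[k] H))).symm
          (map lid (γ H H (H ⊗[k] (H ⊗[k] H))).symm.toLinearMap
            (map lid (map lid (map lid T3)) (T4 h))) := by rw [← apL]
    _ = (γ H (H ⊗[k] H) (H ⊗[k] (H ⊗[k] H))).symm
          (map lid (γ H H (H ⊗[k] (H ⊗[k] H))).symm.toLinearMap (T6 h)) := by
            rw [show map (lid : H →ₗ[k] H) (map lid (map lid (T3 (k := k) (H := H)))) (T4 h)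
              = T6 h from DFunLike.congr_fun M5 h]

lemma hopfS : (μ ∘ₗ (map (HopfAlgebra.antipode k) lid)) ∘ₗ Dl
    = Algebra.linearMap k H ∘ₗ Coalgebra.counit := by
  rw [LinearMap.comp_assoc]
  exact HopfAlgebra.mul_antipode_rTensor_comul

lemma KDel : (map (μ ∘ₗ (map (HopfAlgebra.antipode k) lid)) lid) ∘ₗ
      (γ H H (H ⊗[k] H)).symm.toLinearMap ∘ₗ (Ysplit (k := k) (H := H))
    = map (Algebra.linearMap k H ∘ₗ Coalgebra.counit) lid := by
  apply LinearMap.ext; intro x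
  calc (map (μ ∘ₗ (map (HopfAlgebra.antipode k) lid)) lid)
        ((γ H H (H ⊗[k] H)).symm ((γ H H (H ⊗[k] H)) (map Dl lid x)))
      = (map (μ ∘ₗ (map (HopfAlgebra.antipode k) lid)) lid) (map Dl lid x) := by
        rw [LinearEquiv.symm_apply_apply]
    _ = map ((μ ∘ₗ (map (HopfAlgebra.antipode k) lid)) ∘ₗ Dl) lid x := apR _ _ _
    _ = map (Algebra.linearMap k H ∘ₗ Coalgebra.counit) lid x := by rw [hopfS]

noncomputable def iotH : H →ₗ[k] H ⊗[k] H := (TensorProduct.mk k H H) 1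
noncomputable def iot : H ⊗[k] H →ₗ[k] H ⊗[k] (H ⊗[k] H) :=
  (TensorProduct.mk k H (H ⊗[k] H)) 1

lemma cu1 : (map (Algebra.linearMap k H ∘ₗ Coalgebra.counit) lid) ∘ₗ Dl
    = (iotH (k := k) (H := H)) := by
  ext1 h
  calc map (Algebra.linearMap k H ∘ₗ Coalgebra.counit) lid (Dl h)
      = map (Algebra.linearMap k H) lid (map Coalgebra.counit lid (Dl h)) := (apR _ _ _).symm
    _ = map (Algebra.linearMap k H) lid ((1 : k) ⊗ₜ h) := by
        rw [show (map Coalgebra.counit (lid : H →ₗ[k] H)) (Dl h) = (1 : k) ⊗ₜ h from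
          Coalgebra.rTensor_counit_comul h]
    _ = iotH h := by simp [iotH]

lemma cu2 : (map (Algebra.linearMap k H ∘ₗ Coalgebra.counit) lid) ∘ₗ (T3 (k := k) (H := H))
    = iot ∘ₗ Dl := by
  ext1 h
  calc map (Algebra.linearMap k H ∘ₗ Coalgebra.counit) lid (map lid Dl (Dl h))
      = map (Algebra.linearMap k H ∘ₗ Coalgebra.counit) Dl (Dl h) := apLR _ _ _
    _ = map lid Dl (map (Algebra.linearMap k H ∘ₗ Coalgebra.counit) lid (Dl h)) :=
        (apRL _ _ _).symm
    _ = map lid Dl (iotH h) := by rw [show map (Algebra.linearMap k H ∘ₗ Coalgebra.counit)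
          (lid : H →ₗ[k] H) (Dl h) = iotH h from DFunLike.congr_fun cu1 h]
    _ = iot (Dl h) := by simp [iotH, iot]

lemma cu3 : (map lid (map (Algebra.linearMap k H ∘ₗ Coalgebra.counit) lid)) ∘ₗ
      (T4 (k := k) (H := H)) = (map lid iot) ∘ₗ T3 := by
  ext1 h
  calc map lid (map (Algebra.linearMap k H ∘ₗ Coalgebra.counit) lid) (map lid T3 (Dl h))
      = map lid ((map (Algebra.linearMap k H ∘ₗ Coalgebra.counit) lid) ∘ₗ T3) (Dl h) :=
        apL _ _ _
    _ = map lid (iot ∘ₗ Dl) (Dl h) := by rw [cu2]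
    _ = map lid iot (map lid Dl (Dl h)) := (apL _ _ _).symm
    _ = map lid iot (T3 h) := rfl

lemma CU : (map lid (map lid (map (Algebra.linearMap k H ∘ₗ Coalgebra.counit) lid))) ∘ₗ
      (T5 (k := k) (H := H)) = (map lid (map lid iot)) ∘ₗ T4 := by
  ext1 h
  calc map lid (map lid (map (Algebra.linearMap k H ∘ₗ Coalgebra.counit) lid))
        (map lid T4 (Dl h))
      = map lid ((map lid (map (Algebra.linearMap k H ∘ₗ Coalgebra.counit) lid)) ∘ₗ T4)
          (Dl h) := apL _ _ _
    _ = map lid ((map lid iot) ∘ₗ T3) (Dl h) := by rw [cu3]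
    _ = map lid (map lid iot) (map lid T3 (Dl h)) := (apL _ _ _).symm
    _ = map lid (map lid iot) (T4 h) := rfl

/-- `z2 ⊗ (u ⊗ (z4 ⊗ z5)) ↦ (u ⊗ z5) ⊗ (z2 ⊗ z4)` -/
noncomputable def rho : H ⊗[k] (H ⊗[k] (H ⊗[k] H)) →ₗ[k] (H ⊗[k] H) ⊗[k] (H ⊗[k] H) :=
  (τ (H ⊗[k] H) (H ⊗[k] H)).toLinearMap
  ∘ₗ (γ H H (H ⊗[k] H)).symm.toLinearMap
  ∘ₗ (map lid (τ (H ⊗[k] H) H).toLinearMap)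
  ∘ₗ (map lid (γ H H H).symm.toLinearMap)
  ∘ₗ (map lid (map lid (τ H H).toLinearMap))

/-- `(z2 ⊗ (u ⊗ (z4 ⊗ z5))) ⊗ f ↦ (u ⊗ (f ⊗ Sinv z5)) ⊗ (z2 ⊗ z4)` -/
noncomputable def sigC5 (Sinv : H →ₗ[k] H) :
    (H ⊗[k] (H ⊗[k] (H ⊗[k] H))) ⊗[k] H →ₗ[k] (H ⊗[k] (H ⊗[k] H)) ⊗[k] (H ⊗[k] H) :=
  (map ((map lid ((map lid Sinv) ∘ₗ (τ H H).toLinearMap)) ∘ₗ (γ H H H).toLinearMap) lid)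
  ∘ₗ (γ (H ⊗[k] H) H (H ⊗[k] H)).symm.toLinearMap
  ∘ₗ (map lid (τ (H ⊗[k] H) H).toLinearMap)
  ∘ₗ (γ (H ⊗[k] H) (H ⊗[k] H) H).toLinearMap
  ∘ₗ (map rho lid)

noncomputable def C5 (Sinv : H →ₗ[k] H) :
    (H ⊗[k] (H ⊗[k] (H ⊗[k] (H ⊗[k] H)))) ⊗[k] (H ⊗[k] H) →ₗ[k] H ⊗[k] (H ⊗[k] H) :=
  (map (μ ∘ₗ (map μ (μ ∘ₗ (map lid μ)))) lid)
  ∘ₗ (γ (H ⊗[k] H) (H ⊗[k] (H ⊗[k] H)) (H ⊗[k] H)).symm.toLinearMap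
  ∘ₗ (map lid (sigC5 Sinv))
  ∘ₗ (tensorTensorTensorComm k H (H ⊗[k] (H ⊗[k] (H ⊗[k] H))) H H).toLinearMap

lemma C5_tmul (Sinv : H →ₗ[k] H) (z1 z2 u z4 z5 e f : H) :
    C5 Sinv ((z1 ⊗ₜ (z2 ⊗ₜ (u ⊗ₜ (z4 ⊗ₜ z5)))) ⊗ₜ (e ⊗ₜ f)) =
      ((z1 * e) * (u * (f * Sinv z5))) ⊗ₜ (z2 ⊗ₜ z4) := by
  simp [C5, sigC5, rho]

/-- `y2 ⊗ (y3 ⊗ y4) ↦ Sinv y4 ⊗ (y2 ⊗ y3)` -/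
noncomputable def rho2 (Sinv : H →ₗ[k] H) :
    H ⊗[k] (H ⊗[k] H) →ₗ[k] H ⊗[k] (H ⊗[k] H) :=
  (map Sinv lid)
  ∘ₗ (γ H H H).toLinearMap
  ∘ₗ (map (τ H H).toLinearMap lid)
  ∘ₗ (γ H H H).symm.toLinearMap
  ∘ₗ (map lid (τ H H).toLinearMap)

noncomputable def sigC2 (Sinv : H →ₗ[k] H) :
    (H ⊗[k] (H ⊗[k] H)) ⊗[k] H →ₗ[k] (H ⊗[k] H) ⊗[k] (H ⊗[k] H) :=
  (γ H H (H ⊗[k] H)).symm.toLinearMap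
  ∘ₗ (τ (H ⊗[k] (H ⊗[k] H)) H).toLinearMap
  ∘ₗ (map (rho2 Sinv) lid)

noncomputable def C2 (Sinv : H →ₗ[k] H) :
    (H ⊗[k] (H ⊗[k] (H ⊗[k] H))) ⊗[k] (H ⊗[k] H) →ₗ[k] H ⊗[k] (H ⊗[k] H) :=
  (map (μ ∘ₗ (map μ μ)) lid)
  ∘ₗ (γ (H ⊗[k] H) (H ⊗[k] H) (H ⊗[k] H)).symm.toLinearMap
  ∘ₗ (map lid (sigC2 Sinv))
  ∘ₗ (tensorTensorTensorComm k H (H ⊗[k] (H ⊗[k] H)) H H).toLinearMap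

lemma C2_tmul (Sinv : H →ₗ[k] H) (y1 y2 y3 y4 e f : H) :
    C2 Sinv ((y1 ⊗ₜ (y2 ⊗ₜ (y3 ⊗ₜ y4))) ⊗ₜ (e ⊗ₜ f)) =
      ((y1 * e) * (f * Sinv y4)) ⊗ₜ (y2 ⊗ₜ y3) := by
  simp [C2, sigC2, rho2]

lemma CL2 (Sinv : H →ₗ[k] H) :
    (C5 Sinv) ∘ₗ (map (map lid (map lid iot)) lid) = C2 Sinv := by
  ext y1 y2 y3 y4 e f
  simp [iot, C5_tmul, C2_tmul, one_mul]

noncomputable def sig6 :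
    ((H ⊗[k] (H ⊗[k] H)) ⊗[k] (H ⊗[k] (H ⊗[k] H))) →ₗ[k]
      H ⊗[k] (H ⊗[k] ((H ⊗[k] H) ⊗[k] (H ⊗[k] H))) :=
  (map lid (map lid (γ H H (H ⊗[k] H)).symm.toLinearMap))
  ∘ₗ (map lid (γ H H (H ⊗[k] (H ⊗[k] H))).toLinearMap)
  ∘ₗ (γ H (H ⊗[k] H) (H ⊗[k] (H ⊗[k] H))).toLinearMap

lemma PA1 :
    (sig6 (k := k) (H := H))
      ∘ₗ (γ H (H ⊗[k] H) (H ⊗[k] (H ⊗[k] H))).symm.toLinearMap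
      ∘ₗ (map lid (γ H H (H ⊗[k] (H ⊗[k] H))).symm.toLinearMap) =
    map lid (map lid ((γ H H (H ⊗[k] H)).symm.toLinearMap)) := by
  ext x1 x2 x3 x4 x5 x6
  simp [sig6]

noncomputable def omega1 (Sinv : H →ₗ[k] H) :
    H ⊗[k] (H ⊗[k] H) →ₗ[k] H ⊗[k] (H ⊗[k] H) :=
  (C5 Sinv)
  ∘ₗ (map (map lid (map lid (map (μ ∘ₗ (map (HopfAlgebra.antipode k) lid)) lid))) lid)
  ∘ₗ (map sig6 lid)
  ∘ₗ (map ((map T3 T3) ∘ₗ Dl) lid)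

noncomputable def omega2 (Sinv : H →ₗ[k] H) :
    H ⊗[k] (H ⊗[k] H) →ₗ[k] H ⊗[k] (H ⊗[k] H) :=
  (C2 Sinv) ∘ₗ (map T4 lid)

lemma CORE (Sinv : H →ₗ[k] H) : omega1 (k := k) (H := H) Sinv = omega2 Sinv := by
  ext h e f
  have key : map lid (map lid (map (μ ∘ₗ (map (HopfAlgebra.antipode k) lid)) lid))
      (sig6 (map (T3 (k := k) (H := H)) T3 (Dl h))) = map lid (map lid iot) (T4 h) := by
    calc map lid (map lid (map (μ ∘ₗ (map (HopfAlgebra.antipode k) lid)) lid))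
          (sig6 (map T3 T3 (Dl h)))
        = map lid (map lid (map (μ ∘ₗ (map (HopfAlgebra.antipode k) lid)) lid))
            (sig6 ((γ H (H ⊗[k] H) (H ⊗[k] (H ⊗[k] H))).symm
              (map lid (γ H H (H ⊗[k] (H ⊗[k] H))).symm.toLinearMap (T6 h)))) := by rw [M4]
      _ = map lid (map lid (map (μ ∘ₗ (map (HopfAlgebra.antipode k) lid)) lid))
            (map lid (map lid ((γ H H (H ⊗[k] H)).symm.toLinearMap)) (T6 h)) := by
          rw [show ∀ y : H ⊗[k] (H ⊗[k] (H ⊗[k] (H ⊗[k] (H ⊗[k] H)))),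
            sig6 ((γ H (H ⊗[k] H) (H ⊗[k] (H ⊗[k] H))).symm
              (map lid (γ H H (H ⊗[k] (H ⊗[k] H))).symm.toLinearMap y)) =
            map lid (map lid ((γ H H (H ⊗[k] H)).symm.toLinearMap)) y from
            fun y => DFunLike.congr_fun (PA1 (k := k) (H := H)) y]
      _ = map lid ((map lid (map (μ ∘ₗ (map (HopfAlgebra.antipode k) lid)) lid)) ∘ₗ
            (map lid ((γ H H (H ⊗[k] H)).symm.toLinearMap))) (T6 h) := by
          rw [apL]
      _ = map lid (map lid ((map (μ ∘ₗ (map (HopfAlgebra.antipode k) lid)) lid) ∘ₗ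
            (γ H H (H ⊗[k] H)).symm.toLinearMap)) (T6 h) := by rw [mapL]
      _ = map lid (map lid ((map (μ ∘ₗ (map (HopfAlgebra.antipode k) lid)) lid) ∘ₗ
            (γ H H (H ⊗[k] H)).symm.toLinearMap))
            (map lid (map lid Ysplit) (T5 h)) := by
          rw [show map (lid : H →ₗ[k] H) (map lid (Ysplit (k := k) (H := H))) (T5 h) = T6 h
            from DFunLike.congr_fun M3 h]
      _ = map lid ((map lid ((map (μ ∘ₗ (map (HopfAlgebra.antipode k) lid)) lid) ∘ₗ
            (γ H H (H ⊗[k] H)).symm.toLinearMap)) ∘ₗ (map lid Ysplit)) (T5 h) := apL _ _ _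
      _ = map lid (map lid ((map (μ ∘ₗ (map (HopfAlgebra.antipode k) lid)) lid) ∘ₗ
            (γ H H (H ⊗[k] H)).symm.toLinearMap ∘ₗ Ysplit)) (T5 h) := by
          rw [mapL, LinearMap.comp_assoc]
      _ = map lid (map lid (map (Algebra.linearMap k H ∘ₗ Coalgebra.counit) lid)) (T5 h) := by
          rw [KDel]
      _ = map lid (map lid iot) (T4 h) := by
          have := DFunLike.congr_fun (CU (k := k) (H := H)) h
          simpa using this
  calc omega1 Sinv (h ⊗ₜ (e ⊗ₜ f))
      = C5 Sinv ((map lid (map lid (map (μ ∘ₗ (map (HopfAlgebra.antipode k) lid)) lid))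
          (sig6 (map T3 T3 (Dl h)))) ⊗ₜ (e ⊗ₜ f)) := by
        simp [omega1, map_tmul]
    _ = C5 Sinv ((map lid (map lid iot) (T4 h)) ⊗ₜ (e ⊗ₜ f)) := by rw [key]
    _ = ((C5 Sinv) ∘ₗ (map (map lid (map lid iot)) lid)) ((T4 h) ⊗ₜ (e ⊗ₜ f)) := by
        simp [map_tmul]
    _ = C2 Sinv ((T4 h) ⊗ₜ (e ⊗ₜ f)) := by rw [CL2]
    _ = omega2 Sinv (h ⊗ₜ (e ⊗ₜ f)) := by simp [omega2, map_tmul]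

theorem exists_repr {A B : Type} [AddCommMonoid A] [Module k A] [AddCommMonoid B] [Module k B]
    (x : A ⊗[k] B) :
    ∃ (n : ℕ) (a : ℕ → A) (b : ℕ → B), x = ∑ i ∈ Finset.range n, a i ⊗ₜ b i := by
  induction x using TensorProduct.induction_on with
  | zero => exact ⟨0, fun _ => 0, fun _ => 0, by simp⟩
  | tmul a b => exact ⟨1, fun _ => a, fun _ => b, by simp⟩
  | add x y hx hy =>
    obtain ⟨n, a, b, rfl⟩ := hx
    obtain ⟨m, c, d, rfl⟩ := hy
    refine ⟨n + m, fun i => if i < n then a i else c (i - n),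
      fun i => if i < n then b i else d (i - n), ?_⟩
    rw [Finset.sum_range_add]
    congr 1
    · exact Finset.sum_congr rfl fun i hi => by
        simp [Finset.mem_range.mp hi]
    · exact Finset.sum_congr rfl fun i hi => by simp

lemma omega1_eval (Sinv : H →ₗ[k] H) (h e f : H)
    (s : Finset ℕ) (a b : ℕ → H)
    (ta : ℕ → Finset ℕ) (p q : ℕ → ℕ → H)
    (va : ℕ → ℕ → Finset ℕ) (r w : ℕ → ℕ → ℕ → H)
    (tb : ℕ → Finset ℕ) (c d : ℕ → ℕ → H)
    (vb : ℕ → ℕ → Finset ℕ) (g g' : ℕ → ℕ → ℕ → H)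
    (hab : Dl h = ∑ i ∈ s, a i ⊗ₜ b i)
    (hpq : ∀ i ∈ s, Dl (a i) = ∑ j ∈ ta i, p i j ⊗ₜ q i j)
    (hrw : ∀ i ∈ s, ∀ j ∈ ta i, Dl (q i j) = ∑ o ∈ va i j, r i j o ⊗ₜ w i j o)
    (hcd : ∀ i ∈ s, Dl (b i) = ∑ j ∈ tb i, c i j ⊗ₜ d i j)
    (hgg : ∀ i ∈ s, ∀ j ∈ tb i, Dl (d i j) = ∑ o ∈ vb i j, g i j o ⊗ₜ g' i j o) :
    omega1 Sinv (h ⊗ₜ (e ⊗ₜ f)) =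
      ∑ i ∈ s, ∑ j ∈ ta i, ∑ o ∈ va i j, ∑ j' ∈ tb i, ∑ o' ∈ vb i j',
        ((p i j * e) * ((HopfAlgebra.antipode (R := k) (w i j o) * c i j') * (f * Sinv (g' i j' o'))))
          ⊗ₜ (r i j o ⊗ₜ g i j' o') := by
  have hT3a : ∀ i ∈ s, T3 (k := k) (a i) =
      ∑ j ∈ ta i, ∑ o ∈ va i j, p i j ⊗ₜ (r i j o ⊗ₜ w i j o) := by
    intro i hi
    rw [T3_ap, hpq i hi, map_sum]
    refine Finset.sum_congr rfl fun j hj => ?_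
    simp [hrw i hi j hj, tmul_sum]
  have hT3b : ∀ i ∈ s, T3 (k := k) (b i) =
      ∑ j ∈ tb i, ∑ o ∈ vb i j, c i j ⊗ₜ (g i j o ⊗ₜ g' i j o) := by
    intro i hi
    rw [T3_ap, hcd i hi, map_sum]
    refine Finset.sum_congr rfl fun j hj => ?_
    simp [hgg i hi j hj, tmul_sum]
  have hX : map (T3 (k := k) (H := H)) T3 (Dl h) =
      ∑ i ∈ s, ∑ j ∈ ta i, ∑ o ∈ va i j, ∑ j' ∈ tb i, ∑ o' ∈ vb i j',
        (p i j ⊗ₜ (r i j o ⊗ₜ w i j o)) ⊗ₜ (c i j' ⊗ₜ (g i j' o' ⊗ₜ g' i j' o')) := by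
    rw [hab, map_sum]
    refine Finset.sum_congr rfl fun i hi => ?_
    rw [map_tmul, hT3a i hi, hT3b i hi, sum_tmul]
    refine Finset.sum_congr rfl fun j _ => ?_
    rw [sum_tmul]
    refine Finset.sum_congr rfl fun o _ => ?_
    rw [tmul_sum]
    refine Finset.sum_congr rfl fun j' _ => ?_
    rw [tmul_sum]
  have : omega1 Sinv (h ⊗ₜ (e ⊗ₜ f)) = C5 Sinv
      ((map lid (map lid (map (μ ∘ₗ (map (HopfAlgebra.antipode k) lid)) lid))
        (sig6 (map T3 T3 (Dl h)))) ⊗ₜ (e ⊗ₜ f)) := by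
    simp [omega1, map_tmul]
  rw [this, hX]
  simp only [sum_tmul, map_sum]
  refine Finset.sum_congr rfl fun i _ => Finset.sum_congr rfl fun j _ =>
    Finset.sum_congr rfl fun o _ => Finset.sum_congr rfl fun j' _ =>
    Finset.sum_congr rfl fun o' _ => ?_
  simp [sig6, C5_tmul, map_tmul]

lemma omega2_eval (Sinv : H →ₗ[k] H) (h e f : H)
    (s : Finset ℕ) (a b : ℕ → H)
    (tb : ℕ → Finset ℕ) (c d : ℕ → ℕ → H)
    (vc : ℕ → ℕ → Finset ℕ) (c1 c2 : ℕ → ℕ → ℕ → H)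
    (hab : Dl h = ∑ i ∈ s, a i ⊗ₜ b i)
    (hcd : ∀ i ∈ s, Dl (b i) = ∑ j ∈ tb i, c i j ⊗ₜ d i j)
    (hc12 : ∀ i ∈ s, ∀ j ∈ tb i, Dl (c i j) = ∑ o ∈ vc i j, c1 i j o ⊗ₜ c2 i j o) :
    omega2 Sinv (h ⊗ₜ (e ⊗ₜ f)) =
      ∑ i ∈ s, ∑ j ∈ tb i, ∑ o ∈ vc i j,
        ((a i * e) * (f * Sinv (d i j))) ⊗ₜ (c1 i j o ⊗ₜ c2 i j o) := by
  have hT3b : ∀ i ∈ s, T3 (k := k) (b i) =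
      ∑ j ∈ tb i, ∑ o ∈ vc i j, c1 i j o ⊗ₜ (c2 i j o ⊗ₜ d i j) := by
    intro i hi
    rw [← apfA' (b i), hcd i hi, map_sum, map_sum]
    refine Finset.sum_congr rfl fun j hj => ?_
    rw [map_tmul, hc12 i hi j hj]
    simp [sum_tmul]
  have hT4 : T4 (k := k) h = ∑ i ∈ s, ∑ j ∈ tb i, ∑ o ∈ vc i j,
      a i ⊗ₜ (c1 i j o ⊗ₜ (c2 i j o ⊗ₜ d i j)) := by
    rw [T4_ap, hab, map_sum]
    refine Finset.sum_congr rfl fun i hi => ?_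
    rw [map_tmul, hT3b i hi]
    simp [tmul_sum]
  have : omega2 Sinv (h ⊗ₜ (e ⊗ₜ f)) = C2 Sinv ((T4 h) ⊗ₜ (e ⊗ₜ f)) := by
    simp [omega2, map_tmul]
  rw [this, hT4]
  simp only [sum_tmul, map_sum]
  refine Finset.sum_congr rfl fun i _ => Finset.sum_congr rfl fun j _ =>
    Finset.sum_congr rfl fun o _ => ?_
  rw [C2_tmul]


theorem exists_repr2 {A B : Type} [AddCommMonoid A] [Module k A] [AddCommMonoid B] [Module k B]
    (x : A ⊗[k] B) :
    ∃ (n : ℕ) (a : ℕ → A) (b : ℕ → B), x = ∑ i ∈ Finset.range n, a i ⊗ₜ b i :=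
  exists_repr x

section KeySection

variable {N : Type} [AddCommGroup N] [Module k N] {M : Type} [AddCommGroup M] [Module k M]

/-- The pointfree anti-Yetter-Drinfeld structure map `h ⊗ x ↦ h¹ x⁻¹ S⁻¹(h³) ⊗ h² x⁰`. -/
noncomputable def aydMap {X : Type} [AddCommMonoid X] [Module k X]
    (Δ : H →ₗ[k] H ⊗[k] H) (Sinv : H →ₗ[k] H)
    (act : H →ₗ[k] X →ₗ[k] X) (coact : X →ₗ[k] H ⊗[k] X) :
    H ⊗[k] X →ₗ[k] H ⊗[k] X :=
  (map μ lid)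
  ∘ₗ (TensorProduct.assoc k H H X).symm.toLinearMap
  ∘ₗ (map μ
      ((map Sinv (lift act)) ∘ₗ (TensorProduct.assoc k H H X).toLinearMap
        ∘ₗ (map (TensorProduct.comm k H H).toLinearMap lid)))
  ∘ₗ (tensorTensorTensorComm k H (H ⊗[k] H) H X).toLinearMap
  ∘ₗ (map ((map lid Δ) ∘ₗ Δ) coact)

theorem aydMap_sum_eq {X : Type} [AddCommMonoid X] [Module k X]
    (Δ : H →ₗ[k] H ⊗[k] H) (Sinv : H →ₗ[k] H)
    (act : H →ₗ[k] X →ₗ[k] X) (coact : X →ₗ[k] H ⊗[k] X)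
    (h : H) (m : X) (s : Finset ℕ) (a b : ℕ → H)
    (t : ℕ → Finset ℕ) (c d : ℕ → ℕ → H)
    (u : Finset ℕ) (e : ℕ → H) (m0 : ℕ → X)
    (h1 : Δ h = ∑ i ∈ s, a i ⊗ₜ b i)
    (h2 : ∀ i ∈ s, Δ (b i) = ∑ j ∈ t i, c i j ⊗ₜ d i j)
    (h3 : coact m = ∑ l ∈ u, e l ⊗ₜ m0 l) :
    aydMap Δ Sinv act coact (h ⊗ₜ m) = ∑ i ∈ s, ∑ j ∈ t i, ∑ l ∈ u,
      (a i * e l * Sinv (d i j)) ⊗ₜ act (c i j) (m0 l) := by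
  have key : (map lid Δ ∘ₗ Δ) h = ∑ i ∈ s, ∑ j ∈ t i, a i ⊗ₜ (c i j ⊗ₜ d i j) := by
    rw [LinearMap.comp_apply, h1, map_sum]
    exact Finset.sum_congr rfl fun i hi => by
      simp [h2 i hi, tmul_sum]
  simp only [aydMap, LinearMap.comp_apply, map_tmul, key, h3, sum_tmul, tmul_sum, map_sum,
    LinearMap.id_coe, id_eq, tensorTensorTensorComm_tmul, assoc_tmul, assoc_symm_tmul,
    comm_tmul, LinearMap.mul'_apply, lift.tmul]
  rw [Finset.sum_comm]
  refine Finset.sum_congr rfl fun i _ => ?_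
  rw [Finset.sum_comm]
  refine Finset.sum_congr rfl fun j _ => Finset.sum_congr rfl fun l _ => ?_
  simp

theorem aydMap_eval2 {X : Type} [AddCommMonoid X] [Module k X]
    (Sinv : H →ₗ[k] H)
    (act : H →ₗ[k] X →ₗ[k] X) (coact : X →ₗ[k] H ⊗[k] X)
    (h : H) (m : X) (s : Finset ℕ) (a b : ℕ → H)
    (t : ℕ → Finset ℕ) (c d : ℕ → ℕ → H)
    (u u' : Finset ℕ) (E : ℕ → ℕ → H) (Z : ℕ → ℕ → X)
    (h1 : Dl h = ∑ i ∈ s, a i ⊗ₜ b i)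
    (h2 : ∀ i ∈ s, Dl (b i) = ∑ j ∈ t i, c i j ⊗ₜ d i j)
    (h3 : coact m = ∑ l ∈ u, ∑ l' ∈ u', E l l' ⊗ₜ Z l l') :
    aydMap Dl Sinv act coact (h ⊗ₜ m) = ∑ l ∈ u, ∑ l' ∈ u', ∑ i ∈ s, ∑ j ∈ t i,
      ((a i * E l l') * Sinv (d i j)) ⊗ₜ act (c i j) (Z l l') := by
  have key : (map lid Dl ∘ₗ Dl) h = ∑ i ∈ s, ∑ j ∈ t i, a i ⊗ₜ (c i j ⊗ₜ d i j) := by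
    rw [LinearMap.comp_apply, h1, map_sum]
    exact Finset.sum_congr rfl fun i hi => by
      simp [h2 i hi, tmul_sum]
  simp only [aydMap, LinearMap.comp_apply, map_tmul, key, h3, sum_tmul, tmul_sum, map_sum,
    LinearMap.id_coe, id_eq, tensorTensorTensorComm_tmul, assoc_tmul, assoc_symm_tmul,
    comm_tmul, LinearMap.mul'_apply, lift.tmul]
  refine Finset.sum_congr rfl fun l _ => Finset.sum_congr rfl fun l' _ =>
    Finset.sum_congr rfl fun i _ => Finset.sum_congr rfl fun j _ => ?_
  simp

lemma reorder7 {β : Type} [AddCommMonoid β] (s : Finset ℕ) (ta : ℕ → Finset ℕ)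
    (va : ℕ → ℕ → Finset ℕ) (u : Finset ℕ) (tb : ℕ → Finset ℕ)
    (vb : ℕ → ℕ → Finset ℕ) (u' : Finset ℕ)
    (F : ℕ → ℕ → ℕ → ℕ → ℕ → ℕ → ℕ → β) :
    ∑ i ∈ s, ∑ j ∈ ta i, ∑ o ∈ va i j, ∑ l ∈ u, ∑ j' ∈ tb i, ∑ o' ∈ vb i j', ∑ l' ∈ u',
        F i j o l j' o' l'
      = ∑ l ∈ u, ∑ l' ∈ u', ∑ i ∈ s, ∑ j ∈ ta i, ∑ o ∈ va i j, ∑ j' ∈ tb i, ∑ o' ∈ vb i j',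
        F i j o l j' o' l' := by
  calc ∑ i ∈ s, ∑ j ∈ ta i, ∑ o ∈ va i j, ∑ l ∈ u, ∑ j' ∈ tb i, ∑ o' ∈ vb i j', ∑ l' ∈ u',
        F i j o l j' o' l'
      = ∑ i ∈ s, ∑ j ∈ ta i, ∑ o ∈ va i j, ∑ l ∈ u, ∑ j' ∈ tb i, ∑ l' ∈ u', ∑ o' ∈ vb i j',
        F i j o l j' o' l' := by
        refine Finset.sum_congr rfl fun i _ => Finset.sum_congr rfl fun j _ =>
          Finset.sum_congr rfl fun o _ => Finset.sum_congr rfl fun l _ =>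
          Finset.sum_congr rfl fun j' _ => Finset.sum_comm
    _ = ∑ i ∈ s, ∑ j ∈ ta i, ∑ o ∈ va i j, ∑ l ∈ u, ∑ l' ∈ u', ∑ j' ∈ tb i, ∑ o' ∈ vb i j',
        F i j o l j' o' l' := by
        refine Finset.sum_congr rfl fun i _ => Finset.sum_congr rfl fun j _ =>
          Finset.sum_congr rfl fun o _ => Finset.sum_congr rfl fun l _ =>
          Finset.sum_comm
    _ = ∑ i ∈ s, ∑ j ∈ ta i, ∑ l ∈ u, ∑ o ∈ va i j, ∑ l' ∈ u', ∑ j' ∈ tb i, ∑ o' ∈ vb i j',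
        F i j o l j' o' l' := by
        refine Finset.sum_congr rfl fun i _ => Finset.sum_congr rfl fun j _ =>
          Finset.sum_comm
    _ = ∑ i ∈ s, ∑ j ∈ ta i, ∑ l ∈ u, ∑ l' ∈ u', ∑ o ∈ va i j, ∑ j' ∈ tb i, ∑ o' ∈ vb i j',
        F i j o l j' o' l' := by
        refine Finset.sum_congr rfl fun i _ => Finset.sum_congr rfl fun j _ =>
          Finset.sum_congr rfl fun l _ => Finset.sum_comm
    _ = ∑ i ∈ s, ∑ l ∈ u, ∑ j ∈ ta i, ∑ l' ∈ u', ∑ o ∈ va i j, ∑ j' ∈ tb i, ∑ o' ∈ vb i j',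
        F i j o l j' o' l' := by
        refine Finset.sum_congr rfl fun i _ => Finset.sum_comm
    _ = ∑ i ∈ s, ∑ l ∈ u, ∑ l' ∈ u', ∑ j ∈ ta i, ∑ o ∈ va i j, ∑ j' ∈ tb i, ∑ o' ∈ vb i j',
        F i j o l j' o' l' := by
        refine Finset.sum_congr rfl fun i _ => Finset.sum_congr rfl fun l _ =>
          Finset.sum_comm
    _ = ∑ l ∈ u, ∑ i ∈ s, ∑ l' ∈ u', ∑ j ∈ ta i, ∑ o ∈ va i j, ∑ j' ∈ tb i, ∑ o' ∈ vb i j',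
        F i j o l j' o' l' := Finset.sum_comm
    _ = ∑ l ∈ u, ∑ l' ∈ u', ∑ i ∈ s, ∑ j ∈ ta i, ∑ o ∈ va i j, ∑ j' ∈ tb i, ∑ o' ∈ vb i j',
        F i j o l j' o' l' := by
        refine Finset.sum_congr rfl fun l _ => Finset.sum_comm

lemma map2_push {A B C : Type} [AddCommMonoid A] [Module k A] [AddCommMonoid B] [Module k B]
    [AddCommMonoid C] [Module k C]
    (F : (A ⊗[k] B) →ₗ[k] C) (sa : Finset ℕ) (fa : ℕ → A) (sb : Finset ℕ) (fb : ℕ → B) :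
    F ((∑ x ∈ sa, fa x) ⊗ₜ (∑ y ∈ sb, fb y)) =
      ∑ x ∈ sa, ∑ y ∈ sb, F (fa x ⊗ₜ fb y) := by
  rw [sum_tmul, map_sum]
  exact Finset.sum_congr rfl fun x _ => by rw [tmul_sum, map_sum]

lemma reorderKey {β : Type} [AddCommMonoid β] (s : Finset ℕ) (ta : ℕ → Finset ℕ)
    (tb : ℕ → Finset ℕ) (va : ℕ → ℕ → Finset ℕ)
    (vb : ℕ → ℕ → Finset ℕ) (u u' : Finset ℕ)
    (F : ℕ → ℕ → ℕ → ℕ → ℕ → ℕ → ℕ → β) :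
    ∑ i ∈ s, ∑ j ∈ ta i, ∑ j' ∈ tb i, ∑ o ∈ va i j, ∑ o' ∈ vb i j', ∑ l ∈ u, ∑ l' ∈ u',
        F i j o l j' o' l'
      = ∑ l ∈ u, ∑ l' ∈ u', ∑ i ∈ s, ∑ j ∈ ta i, ∑ o ∈ va i j, ∑ j' ∈ tb i, ∑ o' ∈ vb i j',
        F i j o l j' o' l' := by
  calc ∑ i ∈ s, ∑ j ∈ ta i, ∑ j' ∈ tb i, ∑ o ∈ va i j, ∑ o' ∈ vb i j', ∑ l ∈ u, ∑ l' ∈ u',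
        F i j o l j' o' l'
      = ∑ i ∈ s, ∑ j ∈ ta i, ∑ j' ∈ tb i, ∑ o ∈ va i j, ∑ l ∈ u, ∑ o' ∈ vb i j', ∑ l' ∈ u',
        F i j o l j' o' l' := by
        refine Finset.sum_congr rfl fun i _ => Finset.sum_congr rfl fun j _ =>
          Finset.sum_congr rfl fun j' _ => Finset.sum_congr rfl fun o _ => Finset.sum_comm
    _ = ∑ i ∈ s, ∑ j ∈ ta i, ∑ j' ∈ tb i, ∑ l ∈ u, ∑ o ∈ va i j, ∑ o' ∈ vb i j', ∑ l' ∈ u',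
        F i j o l j' o' l' := by
        refine Finset.sum_congr rfl fun i _ => Finset.sum_congr rfl fun j _ =>
          Finset.sum_congr rfl fun j' _ => Finset.sum_comm
    _ = ∑ i ∈ s, ∑ j ∈ ta i, ∑ l ∈ u, ∑ j' ∈ tb i, ∑ o ∈ va i j, ∑ o' ∈ vb i j', ∑ l' ∈ u',
        F i j o l j' o' l' := by
        refine Finset.sum_congr rfl fun i _ => Finset.sum_congr rfl fun j _ =>
          Finset.sum_comm
    _ = ∑ i ∈ s, ∑ l ∈ u, ∑ j ∈ ta i, ∑ j' ∈ tb i, ∑ o ∈ va i j, ∑ o' ∈ vb i j', ∑ l' ∈ u',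
        F i j o l j' o' l' := by
        refine Finset.sum_congr rfl fun i _ => Finset.sum_comm
    _ = ∑ l ∈ u, ∑ i ∈ s, ∑ j ∈ ta i, ∑ j' ∈ tb i, ∑ o ∈ va i j, ∑ o' ∈ vb i j', ∑ l' ∈ u',
        F i j o l j' o' l' := Finset.sum_comm
    _ = ∑ l ∈ u, ∑ i ∈ s, ∑ j ∈ ta i, ∑ j' ∈ tb i, ∑ o ∈ va i j, ∑ l' ∈ u', ∑ o' ∈ vb i j',
        F i j o l j' o' l' := by
        refine Finset.sum_congr rfl fun l _ => Finset.sum_congr rfl fun i _ =>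
          Finset.sum_congr rfl fun j _ => Finset.sum_congr rfl fun j' _ =>
          Finset.sum_congr rfl fun o _ => Finset.sum_comm
    _ = ∑ l ∈ u, ∑ i ∈ s, ∑ j ∈ ta i, ∑ j' ∈ tb i, ∑ l' ∈ u', ∑ o ∈ va i j, ∑ o' ∈ vb i j',
        F i j o l j' o' l' := by
        refine Finset.sum_congr rfl fun l _ => Finset.sum_congr rfl fun i _ =>
          Finset.sum_congr rfl fun j _ => Finset.sum_congr rfl fun j' _ =>
          Finset.sum_comm
    _ = ∑ l ∈ u, ∑ i ∈ s, ∑ j ∈ ta i, ∑ l' ∈ u', ∑ j' ∈ tb i, ∑ o ∈ va i j, ∑ o' ∈ vb i j',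
        F i j o l j' o' l' := by
        refine Finset.sum_congr rfl fun l _ => Finset.sum_congr rfl fun i _ =>
          Finset.sum_congr rfl fun j _ => Finset.sum_comm
    _ = ∑ l ∈ u, ∑ i ∈ s, ∑ l' ∈ u', ∑ j ∈ ta i, ∑ j' ∈ tb i, ∑ o ∈ va i j, ∑ o' ∈ vb i j',
        F i j o l j' o' l' := by
        refine Finset.sum_congr rfl fun l _ => Finset.sum_congr rfl fun i _ =>
          Finset.sum_comm
    _ = ∑ l ∈ u, ∑ l' ∈ u', ∑ i ∈ s, ∑ j ∈ ta i, ∑ j' ∈ tb i, ∑ o ∈ va i j, ∑ o' ∈ vb i j',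
        F i j o l j' o' l' := by
        refine Finset.sum_congr rfl fun l _ => Finset.sum_comm
    _ = ∑ l ∈ u, ∑ l' ∈ u', ∑ i ∈ s, ∑ j ∈ ta i, ∑ o ∈ va i j, ∑ j' ∈ tb i, ∑ o' ∈ vb i j',
        F i j o l j' o' l' := by
        refine Finset.sum_congr rfl fun l _ => Finset.sum_congr rfl fun l' _ =>
          Finset.sum_congr rfl fun i _ => Finset.sum_congr rfl fun j _ =>
          Finset.sum_comm

lemma key (Sinv : H →ₗ[k] H)
    (actN : H →ₗ[k] N →ₗ[k] N) (coactN : N →ₗ[k] H ⊗[k] N)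
    (actM : H →ₗ[k] M →ₗ[k] M) (coactM : M →ₗ[k] H ⊗[k] M)
    (hYD : HC.YDll Dl (HopfAlgebra.antipode (R := k)) actN coactN)
    (hAYD : HC.AYDll Dl Sinv actM coactM)
    (h : H) (z : N ⊗[k] M) :
    HC.codiagCoact coactN coactM (HC.diagAct Dl actN actM h z)
      = aydMap Dl Sinv (HC.diagAct Dl actN actM) (HC.codiagCoact coactN coactM) (h ⊗ₜ z) := by
  induction z using TensorProduct.induction_on with
  | zero => simp
  | add x y hx hy => simp only [map_add, tmul_add, hx, hy]
  | tmul n m =>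
    obtain ⟨ns, a, b, hab⟩ := exists_repr (Dl h)
    choose ta p q hpq using fun i => exists_repr (Dl (a i))
    choose va r w hrw using fun i j => exists_repr (Dl (q i j))
    choose tb c d hcd using fun i => exists_repr (Dl (b i))
    choose vb g g' hgg using fun i j => exists_repr (Dl (d i j))
    choose vc c1 c2 hc12 using fun i j => exists_repr (Dl (c i j))
    obtain ⟨nu, e, n0, hen⟩ := exists_repr (coactN n)
    obtain ⟨nu', f, m0, hfm⟩ := exists_repr (coactM m)
    have hYDi : ∀ i, coactN (actN (a i) n) =
        ∑ j ∈ Finset.range (ta i), ∑ o ∈ Finset.range (va i j), ∑ l ∈ Finset.range nu,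
          (p i j * e l * HopfAlgebra.antipode (R := k) (w i j o)) ⊗ₜ actN (r i j o) (n0 l) :=
      fun i => hYD (a i) n (Finset.range (ta i)) (p i) (q i)
        (fun j => Finset.range (va i j)) (r i) (w i) (Finset.range nu) e n0
        (hpq i) (fun j _ => hrw i j) hen
    have hAYDi : ∀ i, coactM (actM (b i) m) =
        ∑ j ∈ Finset.range (tb i), ∑ o ∈ Finset.range (vb i j), ∑ l ∈ Finset.range nu',
          (c i j * f l * Sinv (g' i j o)) ⊗ₜ actM (g i j o) (m0 l) :=
      fun i => hAYD (b i) m (Finset.range (tb i)) (c i) (d i)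
        (fun j => Finset.range (vb i j)) (g i) (g' i) (Finset.range nu') f m0
        (hcd i) (fun j _ => hgg i j) hfm
    have dact : HC.diagAct Dl actN actM h (n ⊗ₜ m) =
        ∑ i ∈ Finset.range ns, actN (a i) n ⊗ₜ actM (b i) m := by
      simp only [HC.diagAct, TensorProduct.curry_apply, LinearMap.comp_apply,
        LinearEquiv.coe_coe, map_tmul, LinearMap.id_coe, id_eq, hab, sum_tmul, map_sum,
        tensorTensorTensorComm_tmul, lift.tmul]
    have lhs1 : HC.codiagCoact coactN coactM (HC.diagAct Dl actN actM h (n ⊗ₜ m)) =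
        ∑ i ∈ Finset.range ns,
          ((map μ lid) ∘ₗ (tensorTensorTensorComm k H N H M).toLinearMap)
            (coactN (actN (a i) n) ⊗ₜ coactM (actM (b i) m)) := by
      rw [dact]
      simp only [HC.codiagCoact, LinearMap.comp_apply, map_sum, LinearEquiv.coe_coe, map_tmul]
    have lhs2 : HC.codiagCoact coactN coactM (HC.diagAct Dl actN actM h (n ⊗ₜ m)) =
        ∑ i ∈ Finset.range ns, ∑ j ∈ Finset.range (ta i), ∑ j' ∈ Finset.range (tb i),
          ∑ o ∈ Finset.range (va i j), ∑ o' ∈ Finset.range (vb i j'),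
          ∑ l ∈ Finset.range nu, ∑ l' ∈ Finset.range nu',
          ((p i j * e l * HopfAlgebra.antipode (R := k) (w i j o)) *
            (c i j' * f l' * Sinv (g' i j' o')))
            ⊗ₜ (actN (r i j o) (n0 l) ⊗ₜ actM (g i j' o') (m0 l')) := by
      rw [lhs1]
      refine Finset.sum_congr rfl fun i _ => ?_
      rw [hYDi i, hAYDi i, map2_push]
      refine Finset.sum_congr rfl fun j _ => Finset.sum_congr rfl fun j' _ => ?_
      rw [map2_push]
      refine Finset.sum_congr rfl fun o _ => Finset.sum_congr rfl fun o' _ => ?_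
      rw [map2_push]
      refine Finset.sum_congr rfl fun l _ => Finset.sum_congr rfl fun l' _ => ?_
      simp only [LinearMap.comp_apply, LinearEquiv.coe_coe, tensorTensorTensorComm_tmul,
        map_tmul, LinearMap.mul'_apply, LinearMap.id_coe, id_eq]
    have lhs3 : HC.codiagCoact coactN coactM (HC.diagAct Dl actN actM h (n ⊗ₜ m)) =
        ∑ l ∈ Finset.range nu, ∑ l' ∈ Finset.range nu',
          (map lid (map (actN.flip (n0 l)) (actM.flip (m0 l'))))
            (omega1 Sinv (h ⊗ₜ (e l ⊗ₜ f l'))) := by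
      rw [lhs2, reorderKey]
      refine Finset.sum_congr rfl fun l _ => Finset.sum_congr rfl fun l' _ => ?_
      rw [omega1_eval Sinv h (e l) (f l') (Finset.range ns) a b
        (fun i => Finset.range (ta i)) p q (fun i j => Finset.range (va i j)) r w
        (fun i => Finset.range (tb i)) c d (fun i j => Finset.range (vb i j)) g g'
        hab (fun i _ => hpq i) (fun i _ j _ => hrw i j) (fun i _ => hcd i)
        (fun i _ j _ => hgg i j)]
      simp only [map_sum]
      refine Finset.sum_congr rfl fun i _ => Finset.sum_congr rfl fun j _ =>
        Finset.sum_congr rfl fun o _ => Finset.sum_congr rfl fun j' _ =>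
        Finset.sum_congr rfl fun o' _ => ?_
      simp only [map_tmul, LinearMap.id_coe, id_eq, LinearMap.flip_apply]
      rw [mul_assoc, mul_assoc, mul_assoc, mul_assoc, mul_assoc]
    have hco : HC.codiagCoact coactN coactM ((n : N) ⊗ₜ[k] (m : M)) =
        ∑ l ∈ Finset.range nu, ∑ l' ∈ Finset.range nu',
          (e l * f l') ⊗ₜ (n0 l ⊗ₜ m0 l') := by
      simp only [HC.codiagCoact, LinearMap.comp_apply, map_tmul, hen, hfm,
        LinearEquiv.coe_coe]
      rw [show ((tensorTensorTensorComm k H N H M) ((∑ l ∈ Finset.range nu, e l ⊗ₜ n0 l) ⊗ₜ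
          (∑ l' ∈ Finset.range nu', f l' ⊗ₜ m0 l'))) =
          ∑ l ∈ Finset.range nu, ∑ l' ∈ Finset.range nu',
            (tensorTensorTensorComm k H N H M) ((e l ⊗ₜ n0 l) ⊗ₜ (f l' ⊗ₜ m0 l')) from
        map2_push (tensorTensorTensorComm k H N H M).toLinearMap _ _ _ _]
      simp only [map_sum, tensorTensorTensorComm_tmul, map_tmul, LinearMap.mul'_apply,
        LinearMap.id_coe, id_eq]
    rw [lhs3, CORE]
    rw [aydMap_eval2 Sinv (HC.diagAct Dl actN actM) (HC.codiagCoact coactN coactM)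
      h (n ⊗ₜ m) (Finset.range ns) a b (fun i => Finset.range (tb i)) c d
      (Finset.range nu) (Finset.range nu') (fun l l' => e l * f l')
      (fun l l' => n0 l ⊗ₜ m0 l') hab (fun i _ => hcd i) hco]
    refine Finset.sum_congr rfl fun l _ => Finset.sum_congr rfl fun l' _ => ?_
    rw [omega2_eval Sinv h (e l) (f l') (Finset.range ns) a b
      (fun i => Finset.range (tb i)) c d (fun i j => Finset.range (vc i j)) c1 c2
      hab (fun i _ => hcd i) (fun i _ j _ => hc12 i j)]
    simp only [map_sum]
    refine Finset.sum_congr rfl fun i _ => Finset.sum_congr rfl fun j _ => ?_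
    have hdact : HC.diagAct Dl actN actM (c i j) (n0 l ⊗ₜ m0 l') =
        ∑ o ∈ Finset.range (vc i j), actN (c1 i j o) (n0 l) ⊗ₜ actM (c2 i j o) (m0 l') := by
      simp only [HC.diagAct, TensorProduct.curry_apply, LinearMap.comp_apply,
        LinearEquiv.coe_coe, map_tmul, LinearMap.id_coe, id_eq, hc12 i j, sum_tmul, map_sum,
        tensorTensorTensorComm_tmul, lift.tmul]
    rw [hdact, tmul_sum]
    refine Finset.sum_congr rfl fun o _ => ?_
    simp only [map_tmul, LinearMap.id_coe, id_eq, LinearMap.flip_apply]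
    simp only [mul_assoc]

end KeySection

end HCAux


open HC TensorProduct

/-- If `N` is a left-left Yetter-Drinfeld module and `M` a
left-left anti-Yetter-Drinfeld module over a Hopf algebra `H` with bijective
antipode, then `N ⊗ M` with the diagonal action and codiagonal coaction is a
left-left anti-Yetter-Drinfeld module. -/
theorem stmt2 {k : Type} [Field k] {H : Type} [Ring H] [HopfAlgebra k H]
    (Sinv : H →ₗ[k] H)
    (hS : ∀ h : H, Sinv (HopfAlgebra.antipode (R := k) h) = h)
    (hS' : ∀ h : H, HopfAlgebra.antipode (R := k) (Sinv h) = h)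
    {N : Type} [AddCommGroup N] [Module k N]
    {M : Type} [AddCommGroup M] [Module k M]
    (actN : H →ₗ[k] N →ₗ[k] N) (coactN : N →ₗ[k] H ⊗[k] N)
    (actM : H →ₗ[k] M →ₗ[k] M) (coactM : M →ₗ[k] H ⊗[k] M)
    (hactN : IsLAct actN) (hactM : IsLAct actM)
    (hcoactN : IsLCoact (Coalgebra.comul (R := k)) (Coalgebra.counit (R := k)) coactN)
    (hcoactM : IsLCoact (Coalgebra.comul (R := k)) (Coalgebra.counit (R := k)) coactM)
    (hYD : YDll (Coalgebra.comul (R := k)) (HopfAlgebra.antipode (R := k)) actN coactN)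
    (hAYD : AYDll (Coalgebra.comul (R := k)) Sinv actM coactM) :
    AYDll (Coalgebra.comul (R := k)) Sinv
      (diagAct (Coalgebra.comul (R := k)) actN actM)
      (codiagCoact coactN coactM) := by
  intro h z s a b t c d u e m0 h1 h2 h3
  rw [← HCAux.aydMap_sum_eq (Coalgebra.comul (R := k)) Sinv
    (diagAct (Coalgebra.comul (R := k)) actN actM) (codiagCoact coactN coactM)
    h z s a b t c d u e m0 h1 h2 h3]
  exact HCAux.key Sinv actN coactN actM coactM hYD hAYD h z
end

section
/- Let H be a Hopf algebra with bijective antipode, M a stable right-left anti-Yetter-Drinfeld module over H, and C a left H-module coalgebra. Then the operator τ_n on M ⊗_H C^{⊗(n+1)} defined by τ_n(m ⊗ c_0 ⊗ ⋯ ⊗ c_n) = m^{(0)} ⊗ c_1 ⊗ ⋯ ⊗ c_n ⊗ m^{(-1)} c_0 satisfies (τ_n)^{n+1} = id. -/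
open TensorProduct

namespace HC

variable {k : Type} [Field k]
variable {H : Type} [Ring H] [Algebra k H]
variable {M : Type} [AddCommGroup M] [Module k M]

def IsRAct (act : H →ₗ[k] M →ₗ[k] M) : Prop :=
  act 1 = LinearMap.id ∧ ∀ g h : H, act (g * h) = (act h) ∘ₗ (act g)

def AYDrl (Δ : H →ₗ[k] H ⊗[k] H) (S : H →ₗ[k] H)
    (act : H →ₗ[k] M →ₗ[k] M) (coact : M →ₗ[k] H ⊗[k] M) : Prop :=
  ∀ (h : H) (m : M) (s : Finset ℕ) (a b : ℕ → H)
    (t : ℕ → Finset ℕ) (c d : ℕ → ℕ → H)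
    (u : Finset ℕ) (e : ℕ → H) (m0 : ℕ → M),
    Δ h = ∑ i ∈ s, a i ⊗ₜ b i →
    (∀ i ∈ s, Δ (b i) = ∑ j ∈ t i, c i j ⊗ₜ d i j) →
    coact m = ∑ l ∈ u, e l ⊗ₜ m0 l →
    coact (act h m) = ∑ i ∈ s, ∑ j ∈ t i, ∑ l ∈ u,
      (S (d i j) * e l * a i) ⊗ₜ act (c i j) (m0 l)

def StableL (act : H →ₗ[k] M →ₗ[k] M) (coact : M →ₗ[k] H ⊗[k] M) : Prop :=
  ∀ (m : M) (u : Finset ℕ) (e : ℕ → H) (m0 : ℕ → M),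
    coact m = ∑ l ∈ u, e l ⊗ₜ m0 l →
    ∑ l ∈ u, act (e l) (m0 l) = m

variable {C : Type} [AddCommGroup C] [Module k C]

/-- Coalgebra axioms for `(ΔC, εC)`. -/
def IsCoalg (ΔC : C →ₗ[k] C ⊗[k] C) (εC : C →ₗ[k] k) : Prop :=
  ((TensorProduct.map ΔC LinearMap.id) ∘ₗ ΔC =
    (TensorProduct.assoc k C C C).symm.toLinearMap ∘ₗ
      (TensorProduct.map LinearMap.id ΔC) ∘ₗ ΔC) ∧
  (∀ c : C, (TensorProduct.lid k C) ((TensorProduct.map εC LinearMap.id) (ΔC c)) = c) ∧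
  (∀ c : C, (TensorProduct.rid k C) ((TensorProduct.map LinearMap.id εC) (ΔC c)) = c)

/-- `C` is an `H`-module coalgebra: `Δ(hc) = h⁽¹⁾c⁽¹⁾ ⊗ h⁽²⁾c⁽²⁾` and
`ε(hc) = ε(h)ε(c)`. -/
def IsModCoalg (Δ : H →ₗ[k] H ⊗[k] H) (ε : H →ₗ[k] k)
    (ΔC : C →ₗ[k] C ⊗[k] C) (εC : C →ₗ[k] k)
    (actC : H →ₗ[k] C →ₗ[k] C) : Prop :=
  (∀ (h : H) (c : C) (s : Finset ℕ) (a b : ℕ → H)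
      (u : Finset ℕ) (c1 c2 : ℕ → C),
    Δ h = ∑ i ∈ s, a i ⊗ₜ b i →
    ΔC c = ∑ j ∈ u, c1 j ⊗ₜ c2 j →
    ΔC (actC h c) = ∑ i ∈ s, ∑ j ∈ u,
      actC (a i) (c1 j) ⊗ₜ actC (b i) (c2 j)) ∧
  (∀ (h : H) (c : C), εC (actC h c) = ε h * εC c)




variable (C : Type) [AddCommGroup C] [Module k C]
variable {M : Type} [AddCommGroup M] [Module k M]

/-- The `(n+1)`-fold tensor power `C^{⊗(n+1)}` (as a bundled module). -/
noncomputable def Tpow : ℕ → ModuleCat.{0} k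
  | 0 => ModuleCat.of k C
  | n + 1 => ModuleCat.of k (C ⊗[k] ↥(Tpow n))

variable {C}

/-- Appending a factor at the end: `(c_1 ⊗ ⋯ ⊗ c_n) ⊗ c ↦ c_1 ⊗ ⋯ ⊗ c_n ⊗ c`. -/
noncomputable def snoc :
    (n : ℕ) → (↥(Tpow (k := k) C n) ⊗[k] C →ₗ[k] ↥(Tpow (k := k) C (n+1)))
  | 0 => LinearMap.id
  | n + 1 =>
    (TensorProduct.map LinearMap.id (snoc n)) ∘ₗ
      (TensorProduct.assoc k C ↥(Tpow (k := k) C n) C).toLinearMap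

/-- The diagonal action of `H` on `C^{⊗(n+1)}`:
`h (c_0 ⊗ ⋯ ⊗ c_n) = h⁽¹⁾c_0 ⊗ ⋯ ⊗ h⁽ⁿ⁺¹⁾c_n`. -/
noncomputable def dAct (Δ : H →ₗ[k] H ⊗[k] H) (actC : H →ₗ[k] C →ₗ[k] C) :
    (n : ℕ) → (H ⊗[k] ↥(Tpow (k := k) C n) →ₗ[k] ↥(Tpow (k := k) C n))
  | 0 => TensorProduct.lift actC
  | n + 1 =>
    (TensorProduct.map (TensorProduct.lift actC) (dAct Δ actC n)) ∘ₗ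
      (TensorProduct.tensorTensorTensorComm k H H C ↥(Tpow (k := k) C n)).toLinearMap ∘ₗ
      (TensorProduct.map Δ LinearMap.id)

/-- The cyclic operator `τ_n (m ⊗ c_0 ⊗ ⋯ ⊗ c_n) =
m⁽⁰⁾ ⊗ c_1 ⊗ ⋯ ⊗ c_n ⊗ m⁽⁻¹⁾ c_0` on `M ⊗ C^{⊗(n+1)}`. -/
noncomputable def cyc (actC : H →ₗ[k] C →ₗ[k] C) (coactM : M →ₗ[k] H ⊗[k] M) :
    (n : ℕ) → (M ⊗[k] ↥(Tpow (k := k) C n) →ₗ[k] M ⊗[k] ↥(Tpow (k := k) C n))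
  | 0 =>
    (TensorProduct.map LinearMap.id (TensorProduct.lift actC)) ∘ₗ
      (TensorProduct.assoc k M H C).toLinearMap ∘ₗ
      (TensorProduct.map ((TensorProduct.comm k H M).toLinearMap ∘ₗ coactM) LinearMap.id)
  | n + 1 =>
    (TensorProduct.map LinearMap.id
        ((snoc (n := n)) ∘ₗ (TensorProduct.comm k C ↥(Tpow (k := k) C n)).toLinearMap)) ∘ₗ
      (TensorProduct.leftComm k C M ↥(Tpow (k := k) C n)).toLinearMap ∘ₗ
      (TensorProduct.map (TensorProduct.lift actC) LinearMap.id) ∘ₗ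
      (TensorProduct.tensorTensorTensorComm k H M C ↥(Tpow (k := k) C n)).toLinearMap ∘ₗ
      (TensorProduct.map coactM LinearMap.id)

/-- The subspace of `M ⊗ C^{⊗(n+1)}` spanned by the relations defining
the balanced tensor product `M ⊗_H C^{⊗(n+1)}` (for a right action on `M`
in curried form and the diagonal action on `C^{⊗(n+1)}`). -/
noncomputable def rel (Δ : H →ₗ[k] H ⊗[k] H) (actC : H →ₗ[k] C →ₗ[k] C)
    (actM : H →ₗ[k] M →ₗ[k] M) (n : ℕ) :
    Submodule k (M ⊗[k] ↥(Tpow (k := k) C n)) :=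
  Submodule.span k
    {z | ∃ (h : H) (m : M) (x : ↥(Tpow (k := k) C n)),
      z = (actM h m) ⊗ₜ x - m ⊗ₜ (dAct Δ actC n (h ⊗ₜ x))}


section Aux
variable {Δ : H →ₗ[k] H ⊗[k] H} {actC : H →ₗ[k] C →ₗ[k] C} {coactM : M →ₗ[k] H ⊗[k] M}

lemma dAct_zero (Δ : H →ₗ[k] H ⊗[k] H) (actC : H →ₗ[k] C →ₗ[k] C) (h : H) (c : C) :
    dAct Δ actC 0 (h ⊗ₜ[k] (c : ↥(Tpow (k := k) C 0))) = actC h c := rfl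

lemma dAct_succ (Δ : H →ₗ[k] H ⊗[k] H) (actC : H →ₗ[k] C →ₗ[k] C) {n : ℕ}
    (h : H) (c : C) (y : ↥(Tpow (k := k) C n))
    {s : Finset ℕ} {a b : ℕ → H} (hh : Δ h = ∑ i ∈ s, a i ⊗ₜ b i) :
    dAct Δ actC (n+1) (h ⊗ₜ[k] ((c ⊗ₜ[k] y : C ⊗[k] ↥(Tpow (k := k) C n)) : ↥(Tpow (k := k) C (n+1))))
      = ∑ i ∈ s, (actC (a i) c ⊗ₜ[k] dAct Δ actC n (b i ⊗ₜ[k] y) : C ⊗[k] ↥(Tpow (k := k) C n)) := by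
  rw [dAct]
  show TensorProduct.map (TensorProduct.lift actC) (dAct Δ actC n)
    (TensorProduct.tensorTensorTensorComm k H H C ↥(Tpow (k := k) C n)
      (TensorProduct.map Δ (LinearMap.id : C ⊗[k] ↥(Tpow (k := k) C n) →ₗ[k] _)
        (h ⊗ₜ[k] (c ⊗ₜ[k] y)))) = _
  rw [map_tmul, hh, sum_tmul, map_sum, map_sum]
  exact Finset.sum_congr rfl fun i _ => rfl

lemma cyc_zero (actC : H →ₗ[k] C →ₗ[k] C) (coactM : M →ₗ[k] H ⊗[k] M)
    (m : M) (c : C) {u : Finset ℕ} {e : ℕ → H} {m0 : ℕ → M}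
    (hm : coactM m = ∑ l ∈ u, e l ⊗ₜ m0 l) :
    cyc actC coactM 0 (m ⊗ₜ[k] (c : ↥(Tpow (k := k) C 0)))
      = ∑ l ∈ u, m0 l ⊗ₜ[k] (actC (e l) c : ↥(Tpow (k := k) C 0)) := by
  rw [cyc]
  show (TensorProduct.map LinearMap.id (TensorProduct.lift actC))
    (TensorProduct.assoc k M H C ((TensorProduct.map ((TensorProduct.comm k H M).toLinearMap ∘ₗ
      coactM) (LinearMap.id : C →ₗ[k] C)) (m ⊗ₜ[k] c))) = _
  rw [map_tmul, LinearMap.comp_apply, hm, map_sum, sum_tmul, map_sum, map_sum]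
  exact Finset.sum_congr rfl fun i _ => rfl

lemma cyc_succ (actC : H →ₗ[k] C →ₗ[k] C) (coactM : M →ₗ[k] H ⊗[k] M) {n : ℕ}
    (m : M) (c : C) (y : ↥(Tpow (k := k) C n)) {u : Finset ℕ} {e : ℕ → H} {m0 : ℕ → M}
    (hm : coactM m = ∑ l ∈ u, e l ⊗ₜ m0 l) :
    cyc actC coactM (n+1) (m ⊗ₜ[k] ((c ⊗ₜ[k] y : C ⊗[k] ↥(Tpow (k := k) C n)) : ↥(Tpow (k := k) C (n+1))))
      = ∑ l ∈ u, m0 l ⊗ₜ[k] snoc n (y ⊗ₜ[k] actC (e l) c) := by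
  rw [cyc]
  show (TensorProduct.map LinearMap.id
      (snoc n ∘ₗ (TensorProduct.comm k C ↥(Tpow (k := k) C n)).toLinearMap))
    (TensorProduct.leftComm k C M ↥(Tpow (k := k) C n)
      (TensorProduct.map (TensorProduct.lift actC) LinearMap.id
        (TensorProduct.tensorTensorTensorComm k H M C ↥(Tpow (k := k) C n)
          (TensorProduct.map coactM (LinearMap.id : C ⊗[k] ↥(Tpow (k := k) C n) →ₗ[k] _)
            (m ⊗ₜ[k] (c ⊗ₜ[k] y)))))) = _
  rw [map_tmul, hm, sum_tmul, map_sum, map_sum, map_sum, map_sum]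
  exact Finset.sum_congr rfl fun i _ => rfl



lemma exists_rep {A B : Type} [AddCommGroup A] [Module k A] [AddCommGroup B] [Module k B]
    (x : A ⊗[k] B) :
    ∃ (u : Finset ℕ) (e : ℕ → A) (f : ℕ → B), x = ∑ l ∈ u, e l ⊗ₜ f l := by
  classical
  obtain ⟨S, rfl⟩ := TensorProduct.exists_finset x
  refine ⟨Finset.range S.card,
    fun i => if h : i < S.card then (S.equivFin.symm ⟨i, h⟩ : A × B).1 else 0,
    fun i => if h : i < S.card then (S.equivFin.symm ⟨i, h⟩ : A × B).2 else 0, ?_⟩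
  rw [← Finset.sum_coe_sort S]
  rw [← Equiv.sum_comp S.equivFin.symm (fun q => ((q : A × B).1 ⊗ₜ[k] (q : A × B).2))]
  rw [← Fin.sum_univ_eq_sum_range]
  exact Finset.sum_congr rfl fun i _ => by simp [i.isLt]

lemma tpow_induction {n : ℕ} {P : ↥(Tpow (k := k) C (n+1)) → Prop}
    (x : ↥(Tpow (k := k) C (n+1))) (zero : P 0)
    (tmul : ∀ (c : C) (y : ↥(Tpow (k := k) C n)),
      P ((c ⊗ₜ[k] y : C ⊗[k] ↥(Tpow (k := k) C n)) : ↥(Tpow (k := k) C (n+1))))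
    (add : ∀ x y, P x → P y → P (x + y)) : P x :=
  TensorProduct.induction_on (motive := P) x zero tmul add

noncomputable def tcast {a b : ℕ} (h : a = b) : ↥(Tpow (k := k) C a) →ₗ[k] ↥(Tpow (k := k) C b) := by
  subst h; exact LinearMap.id

@[simp] lemma tcast_rfl {a : ℕ} (x : ↥(Tpow (k := k) C a)) : tcast rfl x = x := rfl

lemma tcast_tcast {a b c : ℕ} (h : a = b) (h' : b = c) (x : ↥(Tpow (k := k) C a)) :
    tcast h' (tcast h x) = tcast (h.trans h') x := by subst h h'; rfl

lemma tcast_cons {a b : ℕ} (h : a = b) (c : C) (x : ↥(Tpow (k := k) C a)) :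
    tcast (show a+1 = b+1 by omega)
        ((c ⊗ₜ[k] x : C ⊗[k] ↥(Tpow (k := k) C a)) : ↥(Tpow (k := k) C (a+1)))
      = (c ⊗ₜ[k] tcast h x : C ⊗[k] ↥(Tpow (k := k) C b)) := by subst h; rfl

/-- concatenation: front has `a+1` factors, back has `b+1` factors. -/
noncomputable def app : (a b : ℕ) →
    (↥(Tpow (k := k) C a) ⊗[k] ↥(Tpow (k := k) C b) →ₗ[k] ↥(Tpow (k := k) C (b+1+a)))
  | 0, _ => LinearMap.id
  | a+1, b =>
    (TensorProduct.map LinearMap.id (app a b)) ∘ₗ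
      (TensorProduct.assoc k C ↥(Tpow (k := k) C a) ↥(Tpow (k := k) C b)).toLinearMap

@[simp] lemma app_zero {b : ℕ} (c : C) (w : ↥(Tpow (k := k) C b)) :
    app 0 b ((c : ↥(Tpow (k := k) C 0)) ⊗ₜ[k] w)
      = (c ⊗ₜ[k] w : C ⊗[k] ↥(Tpow (k := k) C b)) := rfl

@[simp] lemma app_succ {a b : ℕ} (c : C) (y : ↥(Tpow (k := k) C a)) (w : ↥(Tpow (k := k) C b)) :
    app (a+1) b (((c ⊗ₜ[k] y : C ⊗[k] ↥(Tpow (k := k) C a)) : ↥(Tpow (k := k) C (a+1))) ⊗ₜ[k] w)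
      = (c ⊗ₜ[k] app a b (y ⊗ₜ[k] w) : C ⊗[k] ↥(Tpow (k := k) C (b+1+a))) := rfl

@[simp] lemma snoc_succ {n : ℕ} (c : C) (y : ↥(Tpow (k := k) C n)) (c' : C) :
    snoc (n+1) (((c ⊗ₜ[k] y : C ⊗[k] ↥(Tpow (k := k) C n)) : ↥(Tpow (k := k) C (n+1))) ⊗ₜ[k] c')
      = (c ⊗ₜ[k] snoc n (y ⊗ₜ[k] c') : C ⊗[k] ↥(Tpow (k := k) C (n+1))) := rfl

/-- Lemma A: appending a single factor via `app` is `snoc`. -/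
lemma app_zero_right : ∀ (b : ℕ) (w : ↥(Tpow (k := k) C b)) (c' : C),
    tcast (by omega : 0+1+b = b+1) (app b 0 (w ⊗ₜ[k] (c' : ↥(Tpow (k := k) C 0))))
      = snoc b (w ⊗ₜ[k] c')
  | 0, w, c' => tcast_rfl _
  | b+1, w, c' => by
    induction w using tpow_induction with
    | zero => erw [zero_tmul]; simp only [map_zero]; exact (map_zero _).symm
    | tmul c w' =>
      exact (tcast_cons (show 0+1+b = b+1 by omega) c (app b 0 (w' ⊗ₜ[k] c'))).trans
        (by rw [app_zero_right b w' c']; exact rfl)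
    | add x y hx hy => erw [add_tmul, map_add, map_add, hx, hy, ← map_add, ← add_tmul]

/-- Lemma B: snoc after app. -/
lemma snoc_app : ∀ (n : ℕ) (b : ℕ) (y : ↥(Tpow (k := k) C n)) (w : ↥(Tpow (k := k) C b)) (c' : C),
    tcast (by omega : b+1+n+1 = b+1+1+n)
        (snoc (b+1+n) (app n b (y ⊗ₜ[k] w) ⊗ₜ[k] c'))
      = app n (b+1) (y ⊗ₜ[k] snoc b (w ⊗ₜ[k] c'))
  | 0, b, y, w, c' => by
    exact tcast_rfl _
  | n+1, b, y, w, c' => by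
    induction y using tpow_induction with
    | zero => simp only [zero_tmul, map_zero, tmul_zero, zero_tmul]
    | tmul c y' =>
      exact (tcast_cons (show b+1+n+1 = b+1+1+n by omega) c
          (snoc (b+1+n) (app n b (y' ⊗ₜ[k] w) ⊗ₜ[k] c'))).trans
        (by rw [snoc_app n b y' w c']; exact rfl)
    | add x y hx hy =>
      rw [add_tmul, map_add, add_tmul, map_add, map_add, hx, hy, add_tmul, map_add]

/-- Lemma D: app with a cons on the right. -/
lemma app_cons : ∀ (b : ℕ) (n : ℕ) (w : ↥(Tpow (k := k) C b)) (c'' : C) (z : ↥(Tpow (k := k) C n)),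
    tcast (by omega : n+1+1+b = n+1+b+1)
        (app b (n+1) (w ⊗ₜ[k]
          (((c'' ⊗ₜ[k] z : C ⊗[k] ↥(Tpow (k := k) C n)) : ↥(Tpow (k := k) C (n+1))))))
      = app (b+1) n ((snoc b (w ⊗ₜ[k] c'')) ⊗ₜ[k] z)
  | 0, n, w, c'', z => by
    exact tcast_rfl _
  | b+1, n, w, c'', z => by
    induction w using tpow_induction with
    | zero => erw [zero_tmul]; simp only [map_zero]; erw [zero_tmul, map_zero]
    | tmul c w' =>
      exact (tcast_cons (show n+1+1+b = n+1+b+1 by omega) c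
          (app b (n+1) (w' ⊗ₜ[k] (((c'' ⊗ₜ[k] z : C ⊗[k] ↥(Tpow (k := k) C n)) : ↥(Tpow (k := k) C (n+1))))))).trans
        (by rw [app_cons b n w' c'' z]; exact rfl)
    | add x y hx hy =>
      erw [add_tmul, map_add, map_add, hx, hy, add_tmul, map_add, add_tmul, map_add]

lemma cyc_tcast (actC : H →ₗ[k] C →ₗ[k] C) (coactM : M →ₗ[k] H ⊗[k] M)
    {a b : ℕ} (h : a = b) (j : ℕ) (m : M) (x : ↥(Tpow (k := k) C a)) :
    (cyc actC coactM b ^ j) (m ⊗ₜ[k] tcast h x)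
      = (TensorProduct.map LinearMap.id (tcast h)) ((cyc actC coactM a ^ j) (m ⊗ₜ[k] x)) := by
  subst h
  rw [show (tcast (rfl : a = a) : ↥(Tpow (k := k) C a) →ₗ[k] ↥(Tpow (k := k) C a))
      = LinearMap.id from rfl, TensorProduct.map_id]
  rfl

lemma coassoc_transport {Δ : H →ₗ[k] H ⊗[k] H} {coactM : M →ₗ[k] H ⊗[k] M}
    (hco : (TensorProduct.map Δ LinearMap.id) ∘ₗ coactM =
      ((TensorProduct.assoc k H H M).symm.toLinearMap) ∘ₗ
        (TensorProduct.map LinearMap.id coactM) ∘ₗ coactM)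
    {V : Type} [AddCommGroup V] [Module k V]
    (G : H →ₗ[k] H →ₗ[k] V)
    (m : M) (u : Finset ℕ) (e : ℕ → H) (m0 : ℕ → M)
    (hm : coactM m = ∑ l ∈ u, e l ⊗ₜ m0 l)
    (u' : ℕ → Finset ℕ) (f : ℕ → ℕ → H) (m00 : ℕ → ℕ → M)
    (hrep : ∀ l ∈ u, coactM (m0 l) = ∑ l' ∈ u' l, f l l' ⊗ₜ m00 l l')
    (t : ℕ → Finset ℕ) (a bb : ℕ → ℕ → H)
    (hd : ∀ l ∈ u, Δ (e l) = ∑ i ∈ t l, a l i ⊗ₜ bb l i) :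
    ∑ l ∈ u, ∑ l' ∈ u' l, m00 l l' ⊗ₜ[k] G (e l) (f l l') =
      ∑ l ∈ u, ∑ i ∈ t l, m0 l ⊗ₜ[k] G (a l i) (bb l i) := by
  set χ : (H ⊗[k] H) ⊗[k] M →ₗ[k] M ⊗[k] V :=
    (TensorProduct.map LinearMap.id (TensorProduct.lift G)) ∘ₗ
      (TensorProduct.comm k (H ⊗[k] H) M).toLinearMap with hχ
  have hχap : ∀ (g h : H) (m' : M), χ ((g ⊗ₜ[k] h) ⊗ₜ[k] m') = m' ⊗ₜ[k] G g h := by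
    intro g h m'; simp [hχ]
  have key : (TensorProduct.map Δ LinearMap.id) (coactM m)
      = (TensorProduct.assoc k H H M).symm
          ((TensorProduct.map LinearMap.id coactM) (coactM m)) := by
    have := LinearMap.congr_fun hco m
    simpa using this
  have lhs : ∑ l ∈ u, ∑ l' ∈ u' l, m00 l l' ⊗ₜ[k] G (e l) (f l l')
      = χ ((TensorProduct.assoc k H H M).symm
          ((TensorProduct.map LinearMap.id coactM) (coactM m))) := by
    rw [hm, map_sum, map_sum, map_sum]
    refine Finset.sum_congr rfl fun l hl => ?_
    rw [map_tmul, LinearMap.id_apply, hrep l hl, tmul_sum, map_sum, map_sum]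
    refine Finset.sum_congr rfl fun l' _ => ?_
    rw [TensorProduct.assoc_symm_tmul, hχap]
  have rhs : ∑ l ∈ u, ∑ i ∈ t l, m0 l ⊗ₜ[k] G (a l i) (bb l i)
      = χ ((TensorProduct.map Δ LinearMap.id) (coactM m)) := by
    rw [hm, map_sum, map_sum]
    refine Finset.sum_congr rfl fun l hl => ?_
    rw [map_tmul, LinearMap.id_apply, hd l hl, sum_tmul, map_sum]
    exact Finset.sum_congr rfl fun i _ => (hχap _ _ _).symm
  rw [lhs, rhs, key]

lemma keyL {Δ : H →ₗ[k] H ⊗[k] H} {actC : H →ₗ[k] C →ₗ[k] C} {coactM : M →ₗ[k] H ⊗[k] M}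
    (hco : (TensorProduct.map Δ LinearMap.id) ∘ₗ coactM =
      ((TensorProduct.assoc k H H M).symm.toLinearMap) ∘ₗ
        (TensorProduct.map LinearMap.id coactM) ∘ₗ coactM) :
    ∀ (n b : ℕ) (m : M) (u : Finset ℕ) (e : ℕ → H) (m0 : ℕ → M),
      coactM m = ∑ l ∈ u, e l ⊗ₜ m0 l →
      ∀ (y : ↥(Tpow (k := k) C n)) (w : ↥(Tpow (k := k) C b)),
      (cyc actC coactM (b+1+n) ^ (n+1)) (m ⊗ₜ[k] app n b (y ⊗ₜ[k] w)) =
        ∑ l ∈ u, m0 l ⊗ₜ[k] tcast (show n+1+b = b+1+n by omega)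
          (app b n (w ⊗ₜ[k] dAct Δ actC n (e l ⊗ₜ[k] y))) := by
  intro n
  induction n with
  | zero =>
    intro b m u e m0 hm y w
    rw [pow_one]
    refine Eq.trans (cyc_succ actC coactM m y w hm) ?_
    refine Finset.sum_congr rfl fun l _ => ?_
    rw [← app_zero_right b w (actC (e l) y)]
    rfl
  | succ n IH =>
    intro b m u e m0 hm y w
    induction y using tpow_induction with
    | zero => simp only [zero_tmul, map_zero, tmul_zero, Finset.sum_const_zero]
    | add x x' hx hx' =>
      simp only [add_tmul, tmul_add, map_add, Finset.sum_add_distrib] at hx hx' ⊢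
      rw [hx, hx']
    | tmul c y' =>
      -- choose representations
      have hrep0 : ∀ l : ℕ, ∃ (u' : Finset ℕ) (f : ℕ → H) (m00 : ℕ → M),
          coactM (m0 l) = ∑ l' ∈ u', f l' ⊗ₜ m00 l' := fun l => exists_rep _
      choose u' f m00 hrep using hrep0
      have hΔ0 : ∀ l : ℕ, ∃ (t : Finset ℕ) (aa bb : ℕ → H),
          Δ (e l) = ∑ i ∈ t, aa i ⊗ₜ bb i := fun l => exists_rep _
      choose t aa bb hΔ using hΔ0
      -- the bilinear comparison map
      set Φ1 : H →ₗ[k] ↥(Tpow (k := k) C (b+1)) :=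
        snoc b ∘ₗ ((TensorProduct.mk k ↥(Tpow (k := k) C b) C) w) ∘ₗ (actC.flip c) with hΦ1
      set Φ2 : H →ₗ[k] ↥(Tpow (k := k) C n) :=
        dAct Δ actC n ∘ₗ ((TensorProduct.mk k H ↥(Tpow (k := k) C n)).flip y') with hΦ2
      set G : H →ₗ[k] H →ₗ[k] ↥(Tpow (k := k) C (b+1+(n+1))) :=
        LinearMap.compl₁₂ (LinearMap.compr₂
          (TensorProduct.mk k ↥(Tpow (k := k) C (b+1)) ↥(Tpow (k := k) C n))
          ((tcast (show n+1+(b+1) = b+1+(n+1) by omega)) ∘ₗ app (b+1) n)) Φ1 Φ2 with hGdef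
      have hG : ∀ g h : H, G g h = tcast (show n+1+(b+1) = b+1+(n+1) by omega)
          (app (b+1) n ((snoc b (w ⊗ₜ[k] actC g c)) ⊗ₜ[k] dAct Δ actC n (h ⊗ₜ[k] y'))) := by
        intro g h
        simp only [hGdef, hΦ1, hΦ2, LinearMap.compl₁₂_apply, LinearMap.compr₂_apply,
          TensorProduct.mk_apply, LinearMap.coe_comp, Function.comp_apply, LinearMap.flip_apply]
      rw [pow_succ, Module.End.mul_apply]
      have h1 : cyc actC coactM (b+1+(n+1)) (m ⊗ₜ[k] (app (n+1) b) ((c ⊗ₜ[k] y') ⊗ₜ[k] w))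
          = ∑ l ∈ u, m0 l ⊗ₜ[k] snoc (b+1+n) ((app n b (y' ⊗ₜ[k] w)) ⊗ₜ[k] actC (e l) c) :=
        cyc_succ actC coactM m c (app n b (y' ⊗ₜ[k] w)) hm
      rw [h1, map_sum]
      have hsn : ∀ c₁ : C, snoc (b+1+n) ((app n b (y' ⊗ₜ[k] w)) ⊗ₜ[k] c₁)
          = tcast (show b+1+1+n = b+1+(n+1) by omega)
              (app n (b+1) (y' ⊗ₜ[k] snoc b (w ⊗ₜ[k] c₁))) := by
        intro c₁
        rw [← snoc_app n b y' w c₁, tcast_tcast]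
        exact (tcast_rfl _).symm
      have hL : ∀ l ∈ u, (cyc actC coactM (b+1+(n+1)) ^ (n+1))
            (m0 l ⊗ₜ[k] snoc (b+1+n) ((app n b (y' ⊗ₜ[k] w)) ⊗ₜ[k] actC (e l) c))
          = ∑ l' ∈ u' l, m00 l l' ⊗ₜ[k] G (e l) (f l l') := by
        intro l _
        rw [hsn, cyc_tcast actC coactM (show b+1+1+n = b+1+(n+1) by omega) (n+1) (m0 l),
          IH (b+1) (m0 l) (u' l) (f l) (m00 l) (hrep l) y' (snoc b (w ⊗ₜ[k] actC (e l) c)),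
          map_sum]
        refine Finset.sum_congr rfl fun l' _ => ?_
        rw [map_tmul, LinearMap.id_apply, tcast_tcast, hG]
      rw [Finset.sum_congr rfl hL]
      have hR : ∀ l ∈ u, (m0 l ⊗ₜ[k] tcast (show n+1+1+b = b+1+(n+1) by omega)
            ((app b (n+1)) (w ⊗ₜ[k] (dAct Δ actC (n+1)) (e l ⊗ₜ[k] (c ⊗ₜ[k] y')))))
          = ∑ i ∈ t l, m0 l ⊗ₜ[k] G (aa l i) (bb l i) := by
        intro l _
        rw [dAct_succ Δ actC (e l) c y' (hΔ l)]; erw [tmul_sum]; rw [map_sum, map_sum, tmul_sum]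
        refine Finset.sum_congr rfl fun i _ => ?_
        have hac : (app b (n+1)) (w ⊗ₜ[k]
              ((actC (aa l i) c ⊗ₜ[k] dAct Δ actC n (bb l i ⊗ₜ[k] y') :
                C ⊗[k] ↥(Tpow (k := k) C n)) : ↥(Tpow (k := k) C (n+1))))
            = tcast (show n+1+b+1 = n+1+1+b by omega)
                (app (b+1) n ((snoc b (w ⊗ₜ[k] actC (aa l i) c)) ⊗ₜ[k]
                  dAct Δ actC n (bb l i ⊗ₜ[k] y'))) := by
          rw [← app_cons b n w (actC (aa l i) c) (dAct Δ actC n (bb l i ⊗ₜ[k] y')), tcast_tcast]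
          exact (tcast_rfl _).symm
        rw [hac, tcast_tcast, hG]
      rw [Finset.sum_congr rfl hR]
      exact coassoc_transport hco G m u e m0 hm u' f m00 (fun l _ => hrep l) t aa bb
        (fun l _ => hΔ l)

lemma cyc_pow_formula {Δ : H →ₗ[k] H ⊗[k] H} {actC : H →ₗ[k] C →ₗ[k] C}
    {coactM : M →ₗ[k] H ⊗[k] M}
    (hco : (TensorProduct.map Δ LinearMap.id) ∘ₗ coactM =
      ((TensorProduct.assoc k H H M).symm.toLinearMap) ∘ₗ
        (TensorProduct.map LinearMap.id coactM) ∘ₗ coactM)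
    (n : ℕ) (m : M) (u : Finset ℕ) (e : ℕ → H) (m0 : ℕ → M)
    (hm : coactM m = ∑ l ∈ u, e l ⊗ₜ m0 l) (x : ↥(Tpow (k := k) C n)) :
    (cyc actC coactM n ^ (n+1)) (m ⊗ₜ[k] x)
      = ∑ l ∈ u, m0 l ⊗ₜ[k] dAct Δ actC n (e l ⊗ₜ[k] x) := by
  induction n with
  | zero =>
    rw [pow_one]
    exact cyc_zero actC coactM m x hm
  | succ n _ =>
    induction x using tpow_induction with
    | zero => simp only [tmul_zero, map_zero, Finset.sum_const_zero]
    | add x x' hx hx' =>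
      simp only [tmul_add, map_add, Finset.sum_add_distrib] at hx hx' ⊢
      rw [hx, hx']
    | tmul c y =>
      have hrep0 : ∀ l : ℕ, ∃ (u' : Finset ℕ) (f : ℕ → H) (m00 : ℕ → M),
          coactM (m0 l) = ∑ l' ∈ u', f l' ⊗ₜ m00 l' := fun l => exists_rep _
      choose u' f m00 hrep using hrep0
      have hΔ0 : ∀ l : ℕ, ∃ (t : Finset ℕ) (aa bb : ℕ → H),
          Δ (e l) = ∑ i ∈ t, aa i ⊗ₜ bb i := fun l => exists_rep _
      choose t aa bb hΔ using hΔ0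
      set Φ1 : H →ₗ[k] ↥(Tpow (k := k) C 0) := actC.flip c with hΦ1
      set Φ2 : H →ₗ[k] ↥(Tpow (k := k) C n) :=
        dAct Δ actC n ∘ₗ ((TensorProduct.mk k H ↥(Tpow (k := k) C n)).flip y) with hΦ2
      set G : H →ₗ[k] H →ₗ[k] ↥(Tpow (k := k) C (n+1)) :=
        LinearMap.compl₁₂ (LinearMap.compr₂
          (TensorProduct.mk k ↥(Tpow (k := k) C 0) ↥(Tpow (k := k) C n))
          ((tcast (show n+1+0 = n+1 by omega)) ∘ₗ app 0 n)) Φ1 Φ2 with hGdef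
      have hG : ∀ g h : H, G g h = tcast (show n+1+0 = n+1 by omega)
          (app 0 n ((actC g c : ↥(Tpow (k := k) C 0)) ⊗ₜ[k] dAct Δ actC n (h ⊗ₜ[k] y))) := by
        intro g h
        simp only [hGdef, hΦ1, hΦ2, LinearMap.compl₁₂_apply, LinearMap.compr₂_apply,
          TensorProduct.mk_apply, LinearMap.coe_comp, Function.comp_apply, LinearMap.flip_apply]
        rfl
      have hG' : ∀ g h : H, G g h
          = ((actC g c ⊗ₜ[k] dAct Δ actC n (h ⊗ₜ[k] y) : C ⊗[k] ↥(Tpow (k := k) C n)) :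
              ↥(Tpow (k := k) C (n+1))) := fun g h => rfl
      rw [pow_succ, Module.End.mul_apply]
      have h1 : cyc actC coactM (n+1) (m ⊗ₜ[k] (c ⊗ₜ[k] y))
          = ∑ l ∈ u, m0 l ⊗ₜ[k] snoc n (y ⊗ₜ[k] actC (e l) c) :=
        cyc_succ actC coactM m c y hm
      rw [h1, map_sum]
      have hL : ∀ l ∈ u, (cyc actC coactM (n+1) ^ (n+1))
            (m0 l ⊗ₜ[k] snoc n (y ⊗ₜ[k] actC (e l) c))
          = ∑ l' ∈ u' l, m00 l l' ⊗ₜ[k] G (e l) (f l l') := by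
        intro l _
        have hsn : snoc n (y ⊗ₜ[k] actC (e l) c)
            = tcast (show 0+1+n = n+1 by omega) (app n 0 (y ⊗ₜ[k] actC (e l) c)) :=
          (app_zero_right n y (actC (e l) c)).symm
        rw [hsn, cyc_tcast actC coactM (show 0+1+n = n+1 by omega) (n+1) (m0 l),
          keyL hco n 0 (m0 l) (u' l) (f l) (m00 l) (hrep l) y (actC (e l) c),
          map_sum]
        refine Finset.sum_congr rfl fun l' _ => ?_
        rw [map_tmul, LinearMap.id_apply, tcast_tcast, hG]
      rw [Finset.sum_congr rfl hL]
      have hR : ∀ l ∈ u, m0 l ⊗ₜ[k] dAct Δ actC (n+1) (e l ⊗ₜ[k] (c ⊗ₜ[k] y))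
          = ∑ i ∈ t l, m0 l ⊗ₜ[k] G (aa l i) (bb l i) := by
        intro l _
        rw [dAct_succ Δ actC (e l) c y (hΔ l)]; erw [tmul_sum]
        exact Finset.sum_congr rfl fun i _ => by rw [hG']
      rw [Finset.sum_congr rfl hR]
      exact coassoc_transport hco G m u e m0 hm u' f m00 (fun l _ => hrep l) t aa bb
        (fun l _ => hΔ l)

end Aux
end HC

open HC TensorProduct

/-- For a stable right-left anti-Yetter-Drinfeld module `M`
and a left `H`-module coalgebra `C`, the cyclic operator `τ_n` on
`M ⊗_H C^{⊗(n+1)}` satisfies `(τ_n)^{n+1} = id` (i.e. on the balanced tensor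
product, `(τ̃_n)^{n+1} z ≡ z` modulo the balancing relations). -/
theorem stmt10 {k : Type} [Field k] {H : Type} [Ring H] [HopfAlgebra k H]
    (Sinv : H →ₗ[k] H)
    (hS : ∀ h : H, Sinv (HopfAlgebra.antipode (R := k) h) = h)
    (hS' : ∀ h : H, HopfAlgebra.antipode (R := k) (Sinv h) = h)
    {M : Type} [AddCommGroup M] [Module k M]
    (actM : H →ₗ[k] M →ₗ[k] M) (coactM : M →ₗ[k] H ⊗[k] M)
    (hactM : IsRAct actM)
    (hcoactM : IsLCoact (Coalgebra.comul (R := k)) (Coalgebra.counit (R := k)) coactM)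
    (hAYD : AYDrl (Coalgebra.comul (R := k)) (HopfAlgebra.antipode (R := k)) actM coactM)
    (hstable : StableL actM coactM)
    {C : Type} [AddCommGroup C] [Module k C]
    (ΔC : C →ₗ[k] C ⊗[k] C) (εC : C →ₗ[k] k) (actC : H →ₗ[k] C →ₗ[k] C)
    (hC : IsCoalg ΔC εC) (hactC : IsLAct actC)
    (hmodcoalg : IsModCoalg (Coalgebra.comul (R := k)) (Coalgebra.counit (R := k))
      ΔC εC actC) :
    ∀ (n : ℕ) (z : M ⊗[k] ↥(Tpow (k := k) C n)),
      ((cyc actC coactM n) ^ (n + 1)) z - z ∈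
        rel (Coalgebra.comul (R := k)) actC actM n := by
  intro n z
  induction z using TensorProduct.induction_on with
  | zero => simpa using Submodule.zero_mem _
  | add x y hx hy =>
    have h : ((cyc actC coactM n) ^ (n + 1)) (x + y) - (x + y)
        = (((cyc actC coactM n) ^ (n + 1)) x - x) + (((cyc actC coactM n) ^ (n + 1)) y - y) := by
      rw [map_add]; abel
    rw [h]
    exact Submodule.add_mem _ hx hy
  | tmul m x =>
    obtain ⟨u, e, m0, hm⟩ := exists_rep (coactM m)
    rw [cyc_pow_formula hcoactM.1 n m u e m0 hm x]
    have hst : ∑ l ∈ u, actM (e l) (m0 l) = m := hstable m u e m0 hm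
    have hsplit : (∑ l ∈ u, m0 l ⊗ₜ[k] dAct (Coalgebra.comul (R := k)) actC n (e l ⊗ₜ[k] x))
          - m ⊗ₜ[k] x
        = ∑ l ∈ u, ((m0 l ⊗ₜ[k] dAct (Coalgebra.comul (R := k)) actC n (e l ⊗ₜ[k] x))
            - (actM (e l) (m0 l)) ⊗ₜ[k] x) := by
      rw [Finset.sum_sub_distrib, ← sum_tmul, hst]
    rw [hsplit]
    refine Submodule.sum_mem _ fun l _ => ?_
    rw [show (m0 l ⊗ₜ[k] dAct (Coalgebra.comul (R := k)) actC n (e l ⊗ₜ[k] x))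
          - (actM (e l) (m0 l)) ⊗ₜ[k] x
        = -((actM (e l) (m0 l)) ⊗ₜ[k] x
          - m0 l ⊗ₜ[k] dAct (Coalgebra.comul (R := k)) actC n (e l ⊗ₜ[k] x)) from
      (neg_sub _ _).symm]
    exact Submodule.neg_mem _ (Submodule.subset_span ⟨e l, m0 l, x, rfl⟩)
end
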